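/- arXiv:1801.02089 — 4 statements merged into one kernel-verified Lean document; each statement's English description precedes it below -/
import Mathlib

section
/- Let F : ℝⁿ → ℝⁿ be semilinear, monotone, and additively homogeneous. Then there exist p ≥ 1, rational stochastic matrices A⁽¹⁾, …, A⁽ᵖ⁾ ∈ ℚ^{n×n}, vectors b⁽¹⁾, …, b⁽ᵖ⁾ ∈ ℝⁿ, and, for every k ∈ [n], an integer M_k ≥ 1 and nonempty subsets S_{k1}, …, S_{kM_k} ⊆ [p], such that for all x ∈ ℝⁿ and all k ∈ [n]: F_k(x) = min_{i ∈ [M_k]} max_{s ∈ S_{ki}} ( ⟨A⁽ˢ⁾_k, x⟩ + b⁽ˢ⁾_k ), where A⁽ˢ⁾_k denotes the k-th row of A⁽ˢ⁾. -/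
open Finset

/-- The tropical semifield `𝕋 = ℝ ∪ {-∞}`, modeled as `WithBot ℝ`
(with `⊔` as tropical addition and `+` as tropical multiplication). -/
abbrev Trop := WithBot ℝ

/-- A set `X ⊆ 𝕋ⁿ` is tropically convex if it is stable under tropical
convex combinations. -/
def TropicallyConvex {n : ℕ} (X : Set (Fin n → Trop)) : Prop :=
  ∀ x ∈ X, ∀ y ∈ X, ∀ l m : Trop, l ⊔ m = 0 →
    (fun i => (l + x i) ⊔ (m + y i)) ∈ X

/-- The tropical convex hull of `X ⊆ 𝕋ⁿ`. -/
def tconv {n : ℕ} (X : Set (Fin n → Trop)) : Set (Fin n → Trop) :=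
  ⋂₀ {Y | TropicallyConvex Y ∧ X ⊆ Y}

/-- A basic semilinear set in `ℝ^d`: finitely many strict rational-linear
inequalities and rational-linear equalities (with real right-hand sides). -/
def BasicSemilinear {d : ℕ} (S : Set (Fin d → ℝ)) : Prop :=
  ∃ (p q : ℕ) (A : Fin p → Fin d → ℚ) (b : Fin p → ℝ)
    (C : Fin q → Fin d → ℚ) (c : Fin q → ℝ),
    S = {x | (∀ i, ∑ j, (A i j : ℝ) * x j > b i) ∧ (∀ i, ∑ j, (C i j : ℝ) * x j = c i)}

/-- A semilinear set is a finite union of basic semilinear sets. -/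
def Semilinear {d : ℕ} (S : Set (Fin d → ℝ)) : Prop :=
  ∃ (N : ℕ) (f : Fin N → Set (Fin d → ℝ)),
    (∀ i, BasicSemilinear (f i)) ∧ S = ⋃ i, f i

/-- The stratum of `Y ⊆ 𝕋^d` associated with `K ⊆ [d]`, as a subset of
`ℝ^{|K|}` (the coordinates in `K` being enumerated in increasing order). -/
def stratum {d : ℕ} (Y : Set (Fin d → Trop)) (K : Finset (Fin d)) :
    Set (Fin K.card → ℝ) :=
  {z | ∃ y ∈ Y, (∀ k, y k ≠ ⊥ ↔ k ∈ K) ∧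
        ∀ j : Fin K.card, y (K.orderIsoOfFin rfl j).1 = (z j : Trop)}

/-- A symmetric tropical Metzler matrix of size `m`, encoded by the data
`(D⁺, D⁻, N)` of the moduli of the positive and negative diagonal entries
and of the (tropically negative or `-∞`) off-diagonal entries. -/
structure MetzlerData (m : ℕ) where
  Dp : Fin m → Trop
  Dm : Fin m → Trop
  offdiag : Fin m → Fin m → Trop
  diag_sign : ∀ i, Dp i = ⊥ ∨ Dm i = ⊥
  offdiag_symm : ∀ i j, offdiag i j = offdiag j i
  offdiag_diag : ∀ i, offdiag i i = ⊥

/-- The affine tropical polynomial `c ⊔ max_k (a_k + x_k)`. -/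
noncomputable def tropAff {n : ℕ} (c : Trop) (a : Fin n → Trop) (x : Fin n → Trop) : Trop :=
  c ⊔ Finset.univ.sup (fun k => a k + x k)

/-- The tropical Metzler spectrahedron `S(Q0 | Q 0, …, Q (n-1)) ⊆ 𝕋ⁿ`. -/
def metzlerSpectrahedron {n m : ℕ} (Q0 : MetzlerData m) (Q : Fin n → MetzlerData m) :
    Set (Fin n → Trop) :=
  {x | (∀ i, tropAff (Q0.Dm i) (fun k => (Q k).Dm i) x ≤
          tropAff (Q0.Dp i) (fun k => (Q k).Dp i) x) ∧
       ∀ i j, i ≠ j →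
         tropAff (Q0.offdiag i j) (fun k => (Q k).offdiag i j) x
           + tropAff (Q0.offdiag i j) (fun k => (Q k).offdiag i j) x
         ≤ tropAff (Q0.Dp i) (fun k => (Q k).Dp i) x
           + tropAff (Q0.Dp j) (fun k => (Q k).Dp j) x}

/-- Projection of `𝕋^{n+n'}` onto the first `n` coordinates. -/
def projFirst (n n' : ℕ) (x : Fin (n + n') → Trop) : Fin n → Trop :=
  fun i => x (Fin.castAdd n' i)

/-- `S ⊆ 𝕋ⁿ` is a projected tropical Metzler spectrahedron. -/
def IsProjMetzlerSpectrahedron {n : ℕ} (S : Set (Fin n → Trop)) : Prop :=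
  ∃ (n' m : ℕ), 1 ≤ m ∧ ∃ (Q0 : MetzlerData m) (Q : Fin (n + n') → MetzlerData m),
    S = projFirst n n' '' metzlerSpectrahedron Q0 Q

/-- The canonical embedding `ℝⁿ → 𝕋ⁿ`. -/
def toTrop {n : ℕ} (x : Fin n → ℝ) : Fin n → Trop := fun i => (x i : Trop)

/-- The homogenization of `S ⊆ 𝕋ⁿ`, a subset of `𝕋^{1+n}`
(first coordinate `x₀`, remaining coordinates `x₀ + x i`). -/
def homog {n : ℕ} (S : Set (Fin n → Trop)) : Set (Fin (n + 1) → Trop) :=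
  {z | ∃ (x0 : Trop) (x : Fin n → Trop), x ∈ S ∧
        z = Fin.cons x0 (fun i => x0 + x i)}

/-- A real tropical cone in `ℝⁿ`. -/
def RealTropCone {n : ℕ} (X : Set (Fin n → ℝ)) : Prop :=
  ∀ x ∈ X, ∀ y ∈ X, ∀ l m : ℝ, (fun i => max (l + x i) (m + y i)) ∈ X

/-- A function `F : ℝⁿ → ℝ^m` is semilinear if its graph is semilinear. -/
def SemilinearFun {n m : ℕ} (F : (Fin n → ℝ) → Fin m → ℝ) : Prop :=
  Semilinear (Set.range fun x => Fin.append x (F x))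

/-- `F : ℝⁿ → ℝⁿ` is additively homogeneous. -/
def AddHomog {n : ℕ} (F : (Fin n → ℝ) → Fin n → ℝ) : Prop :=
  ∀ (c : ℝ) (x : Fin n → ℝ), F (fun i => c + x i) = fun i => c + F x i

/-- A piecewise description of `F : ℝⁿ → ℝ^m`: finitely many closed polyhedra
with nonempty interior covering `ℝⁿ`, on each of which `F` is affine. -/
def IsPiecewiseDescription {n m : ℕ} (F : (Fin n → ℝ) → Fin m → ℝ) (p : ℕ)
    (W : Fin p → Set (Fin n → ℝ)) (A : Fin p → Fin m → Fin n → ℝ)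
    (b : Fin p → Fin m → ℝ) : Prop :=
  (∀ s, ∃ (q : ℕ) (C : Fin q → Fin n → ℝ) (d : Fin q → ℝ),
      W s = {x | ∀ i, d i ≤ ∑ j, C i j * x j}) ∧
  (∀ s, (interior (W s)).Nonempty) ∧
  (⋃ s, W s) = Set.univ ∧
  ∀ s, ∀ x ∈ W s, ∀ k, F x k = (∑ j, A s k j * x j) + b s k

/-- The all-`-∞` symmetric tropical Metzler matrix. -/
def botMetzler (m : ℕ) : MetzlerData m :=
  ⟨fun _ => ⊥, fun _ => ⊥, fun _ _ => ⊥, fun _ => Or.inl rfl, fun _ _ => rfl, fun _ => rfl⟩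

section Aux
open Matrix

lemma tmono_aux (t : ℕ → ℝ) (hmono : ∀ j, t j ≤ t (j+1)) :
    ∀ i j, i ≤ j → t i ≤ t j := by
  intro i j hij
  induction j with
  | zero => simp_all
  | succ j ih =>
    rcases Nat.lt_or_ge i (j+1) with h | h
    · exact le_trans (ih (Nat.lt_succ_iff.mp h)) (hmono j)
    · have : i = j + 1 := le_antisymm hij h
      simp [this]

lemma chain1d : ∀ (N : ℕ), 0 < N → ∀ (t a b : ℕ → ℝ),
    (∀ j, t j ≤ t (j+1)) →
    (∀ j, j + 1 < N → a j + b j * t (j+1) = a (j+1) + b (j+1) * t (j+1)) →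
    ∃ j < N, a j + b j * t 0 ≤ a 0 + b 0 * t 0 ∧
      a (N-1) + b (N-1) * t N ≤ a j + b j * t N := by
  intro N
  induction N with
  | zero => omega
  | succ N ih =>
    intro _ t a b hmono hmatch
    rcases Nat.eq_zero_or_pos N with rfl | hN'
    · exact ⟨0, by omega, le_refl _, by simp⟩
    obtain ⟨j, hjN, hj0, hjN'⟩ := ih hN' t a b hmono (fun j hj => hmatch j (by omega))
    by_cases hc : a N + b N * t 0 ≤ a 0 + b 0 * t 0
    · exact ⟨N, by omega, hc, by simp⟩
    · push_neg at hc
      refine ⟨j, by omega, hj0, ?_⟩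
      have hmatchN : a (N-1) + b (N-1) * t N = a N + b N * t N := by
        have h1 := hmatch (N-1) (by omega)
        have hN1 : N - 1 + 1 = N := by omega
        rwa [hN1] at h1
      have hjtN : a N + b N * t N ≤ a j + b j * t N := hmatchN ▸ hjN'
      have hd0 : a j + b j * t 0 < a N + b N * t 0 := lt_of_le_of_lt hj0 hc
      have ht0N : t 0 < t N := by
        rcases lt_or_ge (t 0) (t N) with h | h
        · exact h
        · exfalso
          have : t 0 = t N := le_antisymm (tmono_aux t hmono 0 N (by omega)) h
          rw [this] at hd0; linarith
      have hslope : 0 < b j - b N := by nlinarith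
      have htN1 : t N ≤ t (N+1) := hmono N
      have hNs : N + 1 - 1 = N := by omega
      rw [hNs]
      nlinarith

lemma chain_cover {ι : Type*} [DecidableEq ι] (I : ι → Set ℝ)
    (hcl : ∀ s, IsClosed (I s)) (hcvx : ∀ s, Convex ℝ (I s)) :
    ∀ (𝒮 : Finset ι) (u v : ℝ), u ≤ v → (Set.Icc u v ⊆ ⋃ s ∈ 𝒮, I s) →
    ∃ (N : ℕ) (t : ℕ → ℝ) (σ : ℕ → ι), 0 < N ∧ t 0 = u ∧ t N = v ∧
      (∀ j, t j ≤ t (j+1)) ∧ ∀ j < N, Set.Icc (t j) (t (j+1)) ⊆ I (σ j) := by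
  intro 𝒮
  induction 𝒮 using Finset.strongInduction with
  | _ 𝒮 ih =>
    intro u v huv hcov
    have hu : u ∈ Set.Icc u v := ⟨le_refl _, huv⟩
    obtain ⟨s, hs𝒮, hus⟩ := Set.mem_iUnion₂.mp (hcov hu)
    set J : Set ℝ := I s ∩ Set.Icc u v with hJ
    have hJne : J.Nonempty := ⟨u, hus, hu⟩
    have hJbdd : BddAbove J := ⟨v, fun w hw => hw.2.2⟩
    have hJcl : IsClosed J := (hcl s).inter isClosed_Icc
    set r := sSup J with hr
    have hrJ : r ∈ J := hJcl.csSup_mem hJne hJbdd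
    have hur : u ≤ r := hrJ.2.1
    have hrv : r ≤ v := hrJ.2.2
    rcases eq_or_lt_of_le hrv with hrv' | hrv'
    · -- r = v : one piece
      refine ⟨1, fun j => if j = 0 then u else v, fun _ => s, one_pos, by simp, by simp, ?_, ?_⟩
      · intro j
        rcases Nat.eq_zero_or_pos j with rfl | hj
        · simpa using huv
        · simp [Nat.pos_iff_ne_zero.mp hj]
      · intro j hj
        interval_cases j
        simpa using ((hcvx s).ordConnected).out hus (hrv' ▸ hrJ.1)
    · -- r < v : find next cell and recurse
      have hxm : ∀ m : ℕ, r + (v - r)/(m+1) ∈ ⋃ s' ∈ 𝒮.erase s, I s' := by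
        intro m
        have hpos : (0:ℝ) < (v - r)/(m+1) := by
          apply div_pos (by linarith)
          positivity
        have hle : (v - r)/(m+1) ≤ v - r := by
          apply div_le_self (by linarith)
          linarith [Nat.cast_nonneg (α:=ℝ) m]
        have hmem : r + (v - r)/(m+1) ∈ Set.Icc u v := ⟨by linarith, by linarith⟩
        obtain ⟨s'', hs'', hx⟩ := Set.mem_iUnion₂.mp (hcov hmem)
        have hne : s'' ≠ s := by
          rintro rfl
          have : r + (v - r)/(m+1) ≤ r := le_csSup hJbdd ⟨hx, hmem⟩
          linarith
        exact Set.mem_iUnion₂.mpr ⟨s'', Finset.mem_erase.mpr ⟨hne, hs''⟩, hx⟩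
      have hUcl : IsClosed (⋃ s' ∈ 𝒮.erase s, I s') :=
        Set.Finite.isClosed_biUnion (𝒮.erase s).finite_toSet (fun i _ => hcl i)
      have htend : Filter.Tendsto (fun m : ℕ => r + (v - r)/(m+1)) Filter.atTop (nhds r) := by
        have h0 : Filter.Tendsto (fun m : ℕ => (v - r)/(m+1)) Filter.atTop (nhds 0) := by
          have := tendsto_one_div_add_atTop_nhds_zero_nat.const_mul (v - r)
          simpa [div_eq_mul_inv, mul_comm] using this
        have := Filter.Tendsto.add (tendsto_const_nhds (x := r) (f := Filter.atTop)) h0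
        simpa using this
      have hrU : r ∈ ⋃ s' ∈ 𝒮.erase s, I s' :=
        hUcl.mem_of_tendsto htend (Filter.Eventually.of_forall hxm)
      obtain ⟨s', hs'mem, hrs'⟩ := Set.mem_iUnion₂.mp hrU
      have hcov' : Set.Icc r v ⊆ ⋃ s'' ∈ 𝒮.erase s, I s'' := by
        intro w hw
        have hw' : w ∈ Set.Icc u v := ⟨le_trans hur hw.1, hw.2⟩
        obtain ⟨s'', hs'', hx⟩ := Set.mem_iUnion₂.mp (hcov hw')
        by_cases hne : s'' = s
        · subst hne
          have hwr : w ≤ r := le_csSup hJbdd ⟨hx, hw'⟩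
          have : w = r := le_antisymm hwr hw.1
          exact Set.mem_iUnion₂.mpr ⟨s', hs'mem, this ▸ hrs'⟩
        · exact Set.mem_iUnion₂.mpr ⟨s'', Finset.mem_erase.mpr ⟨hne, hs''⟩, hx⟩
      obtain ⟨N', t', σ', hN', ht'0, ht'N, ht'mono, ht'p⟩ :=
        ih (𝒮.erase s) (Finset.erase_ssubset hs𝒮) r v (le_of_lt hrv') hcov'
      refine ⟨N'+1, fun j => if j = 0 then u else t' (j-1),
        fun j => if j = 0 then s else σ' (j-1), Nat.succ_pos _, by simp, by simp [ht'N], ?_, ?_⟩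
      · intro j
        rcases Nat.eq_zero_or_pos j with rfl | hj
        · simpa [ht'0] using hur
        · have h1 : j ≠ 0 := Nat.pos_iff_ne_zero.mp hj
          have h2 : j + 1 ≠ 0 := by omega
          simp only [h1, h2, if_neg]
          have : j - 1 + 1 = j + 1 - 1 := by omega
          simpa [this] using ht'mono (j-1)
      · intro j hj
        rcases Nat.eq_zero_or_pos j with rfl | hjpos
        · simpa [ht'0] using ((hcvx s).ordConnected).out hus hrJ.1
        · have h1 : j ≠ 0 := Nat.pos_iff_ne_zero.mp hjpos
          have h2 : j + 1 ≠ 0 := by omega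
          simp only [h1, h2, if_neg]
          have : j + 1 - 1 = j - 1 + 1 := by omega
          rw [this]
          exact ht'p (j-1) (by omega)

lemma exists_left_inverse {q n : ℕ} (Cy : Fin q → Fin n → ℚ)
    (hker : ∀ v : Fin n → ℚ, (∀ i, ∑ j, Cy i j * v j = 0) → v = 0) :
    ∃ D : Fin n → Fin q → ℚ, ∀ a c, ∑ i, D a i * Cy i c = if a = c then 1 else 0 := by
  classical
  set C : Matrix (Fin q) (Fin n) ℚ := Matrix.of Cy with hC
  set M : Matrix (Fin n) (Fin n) ℚ := Cᵀ * C with hM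
  have hdet : M.det ≠ 0 := by
    intro hdet
    obtain ⟨v, hv0, hMv⟩ := (Matrix.exists_mulVec_eq_zero_iff).mpr hdet
    have hCv : C.mulVec v = 0 := by
      have h1 : v ⬝ᵥ M.mulVec v = 0 := by rw [hMv]; simp
      have h2 : v ⬝ᵥ M.mulVec v = (C.mulVec v) ⬝ᵥ (C.mulVec v) := by
        rw [hM, ← Matrix.mulVec_mulVec, Matrix.dotProduct_mulVec,
          Matrix.vecMul_transpose]
      rw [h2] at h1
      funext i
      have hnn : ∀ i ∈ Finset.univ (α := Fin q), 0 ≤ C.mulVec v i * C.mulVec v i :=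
        fun i _ => mul_self_nonneg _
      have := (Finset.sum_eq_zero_iff_of_nonneg hnn).mp h1 i (Finset.mem_univ i)
      have := mul_self_eq_zero.mp this
      simpa using this
    have : v = 0 := by
      apply hker
      intro i
      have := congrFun hCv i
      simpa [Matrix.mulVec, dotProduct, hC] using this
    exact hv0 this
  have hunit : IsUnit M.det := isUnit_iff_ne_zero.mpr hdet
  refine ⟨fun a i => (M⁻¹ * Cᵀ) a i, fun a c => ?_⟩
  have h1 : (M⁻¹ * Cᵀ) * C = 1 := by
    rw [Matrix.mul_assoc, ← hM, Matrix.nonsing_inv_mul M hunit]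
  have := congrFun (congrFun h1 a) c
  simpa [Matrix.mul_apply, hC, Matrix.one_apply] using this

variable {n : ℕ}

lemma continuous_aff (r : Fin n → ℝ) (c : ℝ) :
    Continuous (fun x : Fin n → ℝ => (∑ l, r l * x l) + c) := by
  apply Continuous.add _ continuous_const
  exact continuous_finset_sum _ fun l _ => continuous_const.mul (continuous_apply l)

lemma hyperplane_interior_empty (r : Fin n → ℝ) (c : ℝ) (hr : r ≠ 0) :
    interior {x : Fin n → ℝ | ∑ l, r l * x l = c} = ∅ := by
  by_contra h
  obtain ⟨x, hx⟩ := Set.nonempty_iff_ne_empty.mpr h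
  obtain ⟨l0, hl0⟩ : ∃ l, r l ≠ 0 := by
    by_contra h'
    push_neg at h'
    exact hr (funext h')
  obtain ⟨ε, hε, hball⟩ := Metric.isOpen_iff.mp isOpen_interior x hx
  have hsub : Metric.ball x ε ⊆ {x : Fin n → ℝ | ∑ l, r l * x l = c} :=
    hball.trans interior_subset
  set δ := ε / 2 with hδ
  have hδpos : 0 < δ := by positivity
  set y := Function.update x l0 (x l0 + δ) with hy
  have hyball : y ∈ Metric.ball x ε := by
    rw [Metric.mem_ball]
    have : dist y x ≤ δ := by
      apply dist_pi_le_iff (le_of_lt hδpos) |>.mpr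
      intro i
      by_cases hi : i = l0
      · subst hi; simp [hy, Real.dist_eq, abs_of_nonneg (le_of_lt hδpos)]
      · simp [hy, Function.update_of_ne hi, le_of_lt hδpos]
    linarith
  have h1 : ∑ l, r l * x l = c := hsub (Metric.mem_ball_self hε)
  have h2 : ∑ l, r l * y l = c := hsub hyball
  have hsum : ∑ l, r l * y l = (∑ l, r l * x l) + r l0 * δ := by
    have hterm : ∀ l ∈ Finset.univ (α := Fin n),
        r l * y l = r l * x l + (if l = l0 then r l0 * δ else 0) := by
      intro l _
      by_cases hl : l = l0
      · subst hl; simp [hy]; ring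
      · simp [hy, Function.update_of_ne hl, hl]
    rw [Finset.sum_congr rfl hterm, Finset.sum_add_distrib, Finset.sum_ite_eq' Finset.univ l0]
    simp
  rw [h1, h2] at hsum
  have : r l0 * δ = 0 := by linarith
  rcases mul_eq_zero.mp this with h' | h'
  · exact hl0 h'
  · linarith

variable {n : ℕ}



lemma F_continuous {F : (Fin n → ℝ) → Fin n → ℝ}
    (hmono : Monotone F) (hhom : AddHomog F) (k : Fin n) :
    Continuous (fun x => F x k) := by
  have key : ∀ x y : Fin n → ℝ, F x k - F y k ≤ dist x y := by
    intro x y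
    have hle : x ≤ fun l => dist x y + y l := by
      intro l
      show x l ≤ dist x y + y l
      have h1 : dist (x l) (y l) ≤ dist x y := dist_le_pi_dist x y l
      have h2 : x l - y l ≤ dist (x l) (y l) := by
        rw [Real.dist_eq]; exact le_abs_self _
      linarith
    have h3 := hmono hle
    rw [hhom (dist x y) y] at h3
    have h4 : F x k ≤ dist x y + F y k := h3 k
    linarith
  have hlip : LipschitzWith 1 (fun x => F x k) := by
    apply LipschitzWith.of_dist_le_mul
    intro x y
    rw [Real.dist_eq, abs_sub_le_iff]
    constructor
    · simpa using key x y
    · rw [dist_comm]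
      simpa using key y x
  exact hlip.continuous

lemma append_add (x x' : Fin n → ℝ) (y y' : Fin n → ℝ) (j : Fin (n + n)) :
    Fin.append (fun i => x i + x' i) (fun i => y i + y' i) j
      = Fin.append x y j + Fin.append x' y' j := by
  refine Fin.addCases ?_ ?_ j <;> intro i <;>
    simp only [Fin.append_left, Fin.append_right]

lemma append_eq_append_iff {x x' y y' : Fin n → ℝ}
    (h : Fin.append x y = Fin.append x' y') : x = x' ∧ y = y' := by
  constructor
  · funext i
    have := congrFun h (Fin.castAdd n i)
    rwa [Fin.append_left, Fin.append_left] at this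
  · funext i
    have := congrFun h (Fin.natAdd n i)
    rwa [Fin.append_right, Fin.append_right] at this

lemma eq_append_parts (z : Fin (n + n) → ℝ) :
    z = Fin.append (fun i => z (Fin.castAdd n i)) (fun i => z (Fin.natAdd n i)) := by
  funext j
  refine Fin.addCases ?_ ?_ j <;> intro i <;>
    simp only [Fin.append_left, Fin.append_right]

variable {n : ℕ}

lemma split_sum (u : Fin (n + n) → ℝ) (x y : Fin n → ℝ) :
    ∑ j, u j * (Fin.append x y) j
      = ∑ jx, u (Fin.castAdd n jx) * x jx + ∑ jy, u (Fin.natAdd n jy) * y jy := by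
  rw [Fin.sum_univ_add (f := fun j => u j * (Fin.append x y) j)]
  simp only [Fin.append_left, Fin.append_right]

lemma subst_aff (u : Fin (n + n) → ℝ) (Lr : Fin n → Fin n → ℝ) (e : Fin n → ℝ)
    (x : Fin n → ℝ) :
    ∑ j, u j * (Fin.append x (fun a => (∑ l, Lr a l * x l) + e a)) j
      = ∑ l, (u (Fin.castAdd n l) + ∑ a, u (Fin.natAdd n a) * Lr a l) * x l
        + ∑ a, u (Fin.natAdd n a) * e a := by
  rw [split_sum]
  have h1 : ∀ a ∈ Finset.univ (α := Fin n),
      u (Fin.natAdd n a) * ((∑ l, Lr a l * x l) + e a)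
        = (∑ l, u (Fin.natAdd n a) * Lr a l * x l) + u (Fin.natAdd n a) * e a := by
    intro a _
    rw [mul_add, Finset.mul_sum]
    ring_nf
  rw [Finset.sum_congr rfl h1, Finset.sum_add_distrib, Finset.sum_comm]
  have h2 : ∀ l ∈ Finset.univ (α := Fin n),
      (u (Fin.castAdd n l) + ∑ a, u (Fin.natAdd n a) * Lr a l) * x l
        = u (Fin.castAdd n l) * x l + ∑ a, u (Fin.natAdd n a) * Lr a l * x l := by
    intro l _
    rw [add_mul, Finset.sum_mul]
  rw [Finset.sum_congr rfl h2, Finset.sum_add_distrib]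
  ring

lemma aff_combo (r : Fin n → ℝ) (c : ℝ) (x y : Fin n → ℝ) (aθ bθ : ℝ) (hab : aθ + bθ = 1) :
    (∑ l, r l * (aθ * x l + bθ * y l)) + c
      = aθ * ((∑ l, r l * x l) + c) + bθ * ((∑ l, r l * y l) + c) := by
  have h1 : ∀ l ∈ Finset.univ (α := Fin n),
      r l * (aθ * x l + bθ * y l) = aθ * (r l * x l) + bθ * (r l * y l) := by
    intro l _; ring
  rw [Finset.sum_congr rfl h1, Finset.sum_add_distrib, ← Finset.mul_sum, ← Finset.mul_sum]
  have : aθ * c + bθ * c = c := by rw [← add_mul, hab, one_mul]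
  ring_nf
  linarith [this]

lemma basic_piece {n : ℕ} (F : (Fin n → ℝ) → Fin n → ℝ)
    (B : Set (Fin (n + n) → ℝ)) (hB : BasicSemilinear B)
    (hsub : ∀ z ∈ B, ∃ x, z = Fin.append x (F x)) :
    ∃ (H : Set (Fin n → ℝ)), IsClosed H ∧ interior H = ∅ ∧
      ({x | Fin.append x (F x) ∈ B} ⊆ H ∨
       ∃ (L : Fin n → Fin n → ℚ) (e : Fin n → ℝ) (U : Set (Fin n → ℝ)),
         IsOpen U ∧ Convex ℝ U ∧ {x | Fin.append x (F x) ∈ B} = U ∧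
         ∀ x ∈ U, ∀ k, F x k = (∑ l, (L k l : ℝ) * x l) + e k) := by
  classical
  obtain ⟨p, q, A, b, C, c, hBeq⟩ := hB
  by_cases hne : B.Nonempty
  case neg =>
    refine ⟨∅, isClosed_empty, interior_empty, Or.inl ?_⟩
    intro x hx
    exact absurd ⟨_, hx⟩ hne
  obtain ⟨z0, hz0B⟩ := hne
  have hmemB : ∀ z, z ∈ B ↔ ((∀ i, ∑ j, (A i j : ℝ) * z j > b i) ∧
      (∀ i, ∑ j, (C i j : ℝ) * z j = c i)) := by
    intro z; rw [hBeq]; rfl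
  set x0 : Fin n → ℝ := fun i => z0 (Fin.castAdd n i) with hx0
  set y0 : Fin n → ℝ := fun i => z0 (Fin.natAdd n i) with hy0
  have hz0 : z0 = Fin.append x0 y0 := eq_append_parts z0
  have hy0F : y0 = F x0 := by
    obtain ⟨x', hx'⟩ := hsub z0 hz0B
    rw [hz0] at hx'
    obtain ⟨h1, h2⟩ := append_eq_append_iff hx'
    rw [h2, ← h1]
  set Cx : Fin q → Fin n → ℚ := fun i j => C i (Fin.castAdd n j) with hCx
  set Cyy : Fin q → Fin n → ℚ := fun i j => C i (Fin.natAdd n j) with hCyy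
  -- the open strict-inequality region
  set O : Set (Fin (n + n) → ℝ) := {z | ∀ i, ∑ j, (A i j : ℝ) * z j > b i} with hO
  have hOopen : IsOpen O := by
    have : O = ⋂ i, {z : Fin (n + n) → ℝ | ∑ j, (A i j : ℝ) * z j > b i} := by
      ext z; simp [hO, Set.mem_iInter]
    rw [this]
    apply isOpen_iInter_of_finite
    intro i
    have hc : Continuous (fun z : Fin (n + n) → ℝ => ∑ j, (A i j : ℝ) * z j) :=
      continuous_finset_sum _ fun j _ => continuous_const.mul (continuous_apply j)
    exact isOpen_lt continuous_const hc
  -- kernel of Cyy is trivial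
  have hker : ∀ v : Fin n → ℚ, (∀ i, ∑ j, Cyy i j * v j = 0) → v = 0 := by
    intro v hv
    set vr : Fin n → ℝ := fun j => (v j : ℝ) with hvr
    set w : Fin (n + n) → ℝ := Fin.append (fun _ => 0) vr with hw
    set ζ : ℝ → Fin (n + n) → ℝ := fun t => fun j => z0 j + t * w j with hζ
    have hζcont : Continuous ζ := by
      apply continuous_pi
      intro j
      exact continuous_const.add (continuous_id.mul continuous_const)
    have hζ0 : ζ 0 = z0 := by funext j; simp [hζ]
    have h0mem : (0:ℝ) ∈ ζ ⁻¹' O := by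
      rw [Set.mem_preimage, hζ0]
      exact ((hmemB z0).mp hz0B).1
    obtain ⟨ε, hε, hball⟩ := Metric.isOpen_iff.mp (hOopen.preimage hζcont) 0 h0mem
    set t : ℝ := ε / 2 with ht
    have htmem : ζ t ∈ O := by
      apply hball
      have habs : |t| < ε := by
        rw [abs_of_nonneg (by linarith : (0:ℝ) ≤ t)]
        rw [ht]; linarith
      simpa [Real.dist_eq] using habs
    have hweq : ∀ i, ∑ j, (C i j : ℝ) * w j = 0 := by
      intro i
      rw [hw, split_sum]
      have h2 : ∑ jy, (C i (Fin.natAdd n jy) : ℝ) * vr jy = 0 := by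
        have h3 := hv i
        have h4 : ((∑ j, Cyy i j * v j : ℚ) : ℝ) = 0 := by rw [h3]; norm_num
        push_cast at h4
        exact h4
      have h1 : ∑ jx, (C i (Fin.castAdd n jx) : ℝ) * (fun _ => (0:ℝ)) jx = 0 := by
        simp only [mul_zero, Finset.sum_const_zero]
      rw [h1, h2, add_zero]
    have hζtB : ζ t ∈ B := by
      rw [hmemB]
      refine ⟨htmem, ?_⟩
      intro i
      have : ∑ j, (C i j : ℝ) * (ζ t) j
          = ∑ j, (C i j : ℝ) * z0 j + t * ∑ j, (C i j : ℝ) * w j := by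
        rw [Finset.mul_sum]
        rw [← Finset.sum_add_distrib]
        apply Finset.sum_congr rfl
        intro j _
        simp [hζ]; ring
      rw [this, hweq i, ((hmemB z0).mp hz0B).2 i]
      ring
    have hζt : ζ t = Fin.append x0 (fun i => y0 i + t * vr i) := by
      funext j
      have : ζ t j = Fin.append x0 y0 j + Fin.append (fun _ => (0:ℝ)) (fun i => t * vr i) j := by
        rw [hζ]
        simp only []
        rw [hz0]
        congr 1
        rw [hw]
        refine Fin.addCases ?_ ?_ j <;> intro i <;>
          simp only [Fin.append_left, Fin.append_right] <;> ring
      rw [this, ← append_add]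
      simp
    obtain ⟨x', hx'⟩ := hsub _ hζtB
    rw [hζt] at hx'
    obtain ⟨h1, h2⟩ := append_eq_append_iff hx'
    have : (fun i => y0 i + t * vr i) = y0 := by
      rw [h2, ← h1, ← hy0F]
    have hvz : ∀ i, t * vr i = 0 := by
      intro i
      have := congrFun this i
      linarith
    funext i
    have := hvz i
    have htne : t ≠ 0 := by positivity
    have : vr i = 0 := by
      rcases mul_eq_zero.mp this with h | h
      · exact absurd h htne
      · exact h
    have : (v i : ℝ) = 0 := this
    exact_mod_cast this
  obtain ⟨D, hD⟩ := exists_left_inverse Cyy hker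
  set L : Fin n → Fin n → ℚ := fun a l => -∑ i, D a i * Cx i l with hL
  set e : Fin n → ℝ := fun a => ∑ i, (D a i : ℝ) * c i with he
  -- key affine identity
  have key : ∀ x y : Fin n → ℝ,
      (∀ i, ∑ jx, (Cx i jx : ℝ) * x jx + ∑ jy, (Cyy i jy : ℝ) * y jy = c i) →
      ∀ a, y a = (∑ l, (L a l : ℝ) * x l) + e a := by
    intro x y hxy a
    have step1 : e a = ∑ i, (D a i : ℝ) *
        (∑ jx, (Cx i jx : ℝ) * x jx + ∑ jy, (Cyy i jy : ℝ) * y jy) := by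
      rw [he]
      exact Finset.sum_congr rfl fun i _ => by rw [hxy i]
    have step2 : e a = (∑ i, (D a i : ℝ) * ∑ jx, (Cx i jx : ℝ) * x jx)
        + ∑ i, (D a i : ℝ) * ∑ jy, (Cyy i jy : ℝ) * y jy := by
      rw [step1, ← Finset.sum_add_distrib]
      exact Finset.sum_congr rfl fun i _ => by ring
    have step3 : ∑ i, (D a i : ℝ) * ∑ jy, (Cyy i jy : ℝ) * y jy = y a := by
      have h1 : ∀ i ∈ Finset.univ (α := Fin q), (D a i : ℝ) * ∑ jy, (Cyy i jy : ℝ) * y jy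
          = ∑ jy, (D a i : ℝ) * (Cyy i jy : ℝ) * y jy := by
        intro i _
        rw [Finset.mul_sum]
        exact Finset.sum_congr rfl fun jy _ => by ring
      rw [Finset.sum_congr rfl h1, Finset.sum_comm]
      have h2 : ∀ jy ∈ Finset.univ (α := Fin n),
          ∑ i, (D a i : ℝ) * (Cyy i jy : ℝ) * y jy
            = (if a = jy then (1:ℝ) else 0) * y jy := by
        intro jy _
        rw [← Finset.sum_mul]
        congr 1
        have h3 : ∑ i, (D a i : ℝ) * (Cyy i jy : ℝ) = ((∑ i, D a i * Cyy i jy : ℚ) : ℝ) := by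
          push_cast; rfl
        rw [h3, hD a jy]
        by_cases haj : a = jy <;> simp [haj]
      rw [Finset.sum_congr rfl h2]
      simp [Finset.sum_ite_eq' Finset.univ a]
    have step4 : ∑ i, (D a i : ℝ) * ∑ jx, (Cx i jx : ℝ) * x jx
        = ∑ l, (∑ i, (D a i : ℝ) * (Cx i l : ℝ)) * x l := by
      have h1 : ∀ i ∈ Finset.univ (α := Fin q), (D a i : ℝ) * ∑ jx, (Cx i jx : ℝ) * x jx
          = ∑ jx, (D a i : ℝ) * (Cx i jx : ℝ) * x jx := by
        intro i _
        rw [Finset.mul_sum]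
        exact Finset.sum_congr rfl fun jx _ => by ring
      rw [Finset.sum_congr rfl h1, Finset.sum_comm]
      exact Finset.sum_congr rfl fun l _ => by rw [Finset.sum_mul]
    have hLcast : ∀ a l, (L a l : ℝ) = -∑ i, (D a i : ℝ) * (Cx i l : ℝ) := by
      intro a l
      rw [hL]
      push_cast
      rfl
    rw [step4] at step2
    have : y a = e a - ∑ l, (∑ i, (D a i : ℝ) * (Cx i l : ℝ)) * x l := by
      rw [step2, step3]; ring
    rw [this]
    have : ∑ l, (L a l : ℝ) * x l = -∑ l, (∑ i, (D a i : ℝ) * (Cx i l : ℝ)) * x l := by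
      rw [← Finset.sum_neg_distrib]
      exact Finset.sum_congr rfl fun l _ => by rw [hLcast]; ring
    rw [this]; ring
  set G : (Fin n → ℝ) → Fin n → ℝ := fun x a => (∑ l, (L a l : ℝ) * x l) + e a with hG
  have hFG : ∀ x, Fin.append x (F x) ∈ B → F x = G x := by
    intro x hx
    funext a
    have heqs := ((hmemB _).mp hx).2
    have heqs' : ∀ i, ∑ jx, (Cx i jx : ℝ) * x jx + ∑ jy, (Cyy i jy : ℝ) * (F x) jy = c i := by
      intro i
      have h5 := heqs i
      rw [split_sum (fun j => (C i j : ℝ)) x (F x)] at h5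
      exact h5
    exact key x (F x) heqs' a
  set ψ : Fin q → Fin n → ℚ := fun i0 l => Cx i0 l + ∑ a, Cyy i0 a * L a l with hψ
  set κ : Fin q → ℝ := fun i0 => ∑ a, (Cyy i0 a : ℝ) * e a with hκ
  have heq : ∀ i0 x, ∑ j, (C i0 j : ℝ) * (Fin.append x (G x)) j
      = (∑ l, (ψ i0 l : ℝ) * x l) + κ i0 := by
    intro i0 x
    have h6 := subst_aff (fun j => (C i0 j : ℝ)) (fun a l => (L a l : ℝ)) e x
    have hGx : G x = fun a => (∑ l, (L a l : ℝ) * x l) + e a := rfl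
    rw [hGx]
    rw [h6]
    congr 1
    apply Finset.sum_congr rfl
    intro l _
    congr 1
    have : (ψ i0 l : ℝ) = (Cx i0 l : ℝ) + ∑ a, (Cyy i0 a : ℝ) * (L a l : ℝ) := by
      rw [hψ]; push_cast; rfl
    rw [this]
  set RA : Fin p → Fin n → ℝ := fun i l =>
    (A i (Fin.castAdd n l) : ℝ) + ∑ a, (A i (Fin.natAdd n a) : ℝ) * (L a l : ℝ) with hRA
  set cA : Fin p → ℝ := fun i => ∑ a, (A i (Fin.natAdd n a) : ℝ) * e a with hcA
  have haff : ∀ i x, ∑ j, (A i j : ℝ) * (Fin.append x (G x)) j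
      = (∑ l, RA i l * x l) + cA i := by
    intro i x
    have h6 := subst_aff (fun j => (A i j : ℝ)) (fun a l => (L a l : ℝ)) e x
    have hGx : G x = fun a => (∑ l, (L a l : ℝ) * x l) + e a := rfl
    rw [hGx, h6]
  set U : Set (Fin n → ℝ) := {x | ∀ i, (∑ l, RA i l * x l) + cA i > b i} with hU
  have hUopen : IsOpen U := by
    have : U = ⋂ i, {x : Fin n → ℝ | (∑ l, RA i l * x l) + cA i > b i} := by
      ext x; simp [hU, Set.mem_iInter]
    rw [this]
    exact isOpen_iInter_of_finite fun i =>
      isOpen_lt continuous_const (continuous_aff (RA i) (cA i))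
  have hUconv : Convex ℝ U := by
    intro x hx y hy aθ bθ ha hb hab
    intro i
    have hcombo : ∀ l, (aθ • x + bθ • y) l = aθ * x l + bθ * y l := by
      intro l; simp [Pi.smul_apply, smul_eq_mul]
    show (∑ l, RA i l * (aθ • x + bθ • y) l) + cA i > b i
    have : ∑ l, RA i l * (aθ • x + bθ • y) l = ∑ l, RA i l * (aθ * x l + bθ * y l) :=
      Finset.sum_congr rfl fun l _ => by rw [hcombo]
    rw [this, aff_combo (RA i) (cA i) x y aθ bθ hab]
    have hvx := hx i
    have hvy := hy i
    rcases lt_or_eq_of_le ha with ha' | ha'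
    · have h1 : aθ * b i < aθ * ((∑ l, RA i l * x l) + cA i) :=
        mul_lt_mul_of_pos_left hvx ha'
      have h2 : bθ * b i ≤ bθ * ((∑ l, RA i l * y l) + cA i) :=
        mul_le_mul_of_nonneg_left (le_of_lt hvy) hb
      have hsum : aθ * b i + bθ * b i = b i := by rw [← add_mul, hab, one_mul]
      linarith
    · have hb1 : bθ = 1 := by linarith
      rw [← ha', hb1]
      simpa using hvy
  by_cases hgood : ∀ i0, (∀ l, ψ i0 l = 0) ∧ κ i0 = c i0
  · -- good case: the piece is the open set U
    have hPU : {x | Fin.append x (F x) ∈ B} = U := by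
      ext x
      constructor
      · intro hx
        have hFGx := hFG x hx
        intro i
        have hstrict := ((hmemB _).mp hx).1 i
        rw [hFGx] at hstrict
        rw [haff i x] at hstrict
        exact hstrict
      · intro hx
        have hGB : Fin.append x (G x) ∈ B := by
          rw [hmemB]
          constructor
          · intro i
            rw [haff i x]
            exact hx i
          · intro i0
            rw [heq i0 x]
            have h7 : ∀ l ∈ Finset.univ (α := Fin n), (ψ i0 l : ℝ) * x l = 0 := by
              intro l _
              have := (hgood i0).1 l
              rw [this]
              simp
            rw [Finset.sum_congr rfl h7]
            simp [(hgood i0).2]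
        obtain ⟨x', hx'⟩ := hsub _ hGB
        obtain ⟨h1, h2⟩ := append_eq_append_iff hx'
        show Fin.append x (F x) ∈ B
        have : G x = F x := by rw [h2, ← h1]
        rw [← this]
        exact hGB
    refine ⟨∅, isClosed_empty, interior_empty, Or.inr ⟨L, e, U, hUopen, hUconv, hPU, ?_⟩⟩
    intro x hxU k
    have hxP : x ∈ {x : Fin n → ℝ | Fin.append x (F x) ∈ B} := by rw [hPU]; exact hxU
    have h8 := hFG x hxP
    rw [h8]
  · -- bad case: the piece lies in a degenerate set
    push_neg at hgood
    obtain ⟨i0, hi0⟩ := hgood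
    by_cases hco : ∀ l, ψ i0 l = 0
    · -- coefficients vanish but constants mismatch: piece is empty
      have hκne : κ i0 ≠ c i0 := hi0 hco
      refine ⟨∅, isClosed_empty, interior_empty, Or.inl ?_⟩
      intro x hx
      exfalso
      have hFGx := hFG x hx
      have heqx := ((hmemB _).mp hx).2 i0
      rw [hFGx, heq i0 x] at heqx
      have h7 : ∀ l ∈ Finset.univ (α := Fin n), (ψ i0 l : ℝ) * x l = 0 := by
        intro l _
        rw [hco l]; simp
      rw [Finset.sum_congr rfl h7] at heqx
      simp at heqx
      exact hκne heqx
    · -- a genuine hyperplane constraint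
      push_neg at hco
      obtain ⟨l0, hl0⟩ := hco
      refine ⟨{x | ∑ l, ((ψ i0 l : ℝ)) * x l = c i0 - κ i0}, ?_, ?_, Or.inl ?_⟩
      · exact isClosed_eq
          (continuous_finset_sum _ fun l _ => continuous_const.mul (continuous_apply l))
          continuous_const
      · apply hyperplane_interior_empty
        intro h
        have := congrFun h l0
        simp at this
        exact hl0 (by exact_mod_cast this)
      · intro x hx
        have hFGx := hFG x hx
        have heqx := ((hmemB _).mp hx).2 i0
        rw [hFGx, heq i0 x] at heqx
        show ∑ l, ((ψ i0 l : ℝ)) * x l = c i0 - κ i0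
        linarith


lemma pieces {n : ℕ} (F : (Fin n → ℝ) → Fin n → ℝ) (hsl : SemilinearFun F) :
    ∃ (p : ℕ), 0 < p ∧ ∃ (A : Fin p → Fin n → Fin n → ℚ) (b : Fin p → Fin n → ℝ)
      (U : Fin p → Set (Fin n → ℝ)),
      (∀ s, IsOpen (U s)) ∧ (∀ s, Convex ℝ (U s)) ∧ (∀ s, (U s).Nonempty) ∧
      (⋃ s, closure (U s)) = Set.univ ∧
      ∀ s, ∀ x ∈ U s, ∀ k, F x k = (∑ l, (A s k l : ℝ) * x l) + b s k := by
  classical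
  obtain ⟨N, Bf, hbasic, hgraph⟩ := hsl
  have hsub : ∀ i, ∀ z ∈ Bf i, ∃ x, z = Fin.append x (F x) := by
    intro i z hz
    have : z ∈ Set.range fun x => Fin.append x (F x) := by
      rw [hgraph]; exact Set.mem_iUnion.mpr ⟨i, hz⟩
    obtain ⟨x, hx⟩ := this
    exact ⟨x, hx.symm⟩
  have hdata : ∀ i, ∃ (H : Set (Fin n → ℝ)) (L : Fin n → Fin n → ℚ) (e : Fin n → ℝ)
      (U : Set (Fin n → ℝ)),
      IsClosed H ∧ interior H = ∅ ∧ IsOpen U ∧ Convex ℝ U ∧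
      (({x | Fin.append x (F x) ∈ Bf i} ⊆ H) ∨
       ({x | Fin.append x (F x) ∈ Bf i} = U ∧
        ∀ x ∈ U, ∀ k, F x k = (∑ l, (L k l : ℝ) * x l) + e k)) := by
    intro i
    obtain ⟨H, hHcl, hHint, halt⟩ := basic_piece F (Bf i) (hbasic i) (hsub i)
    rcases halt with h | ⟨L, e, U, h1, h2, h3, h4⟩
    · exact ⟨H, 0, 0, ∅, hHcl, hHint, isOpen_empty, convex_empty, Or.inl h⟩
    · exact ⟨H, L, e, U, hHcl, hHint, h1, h2, Or.inr ⟨h3, h4⟩⟩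
  choose H L e U hHcl hHint hUopen hUconv hcase using hdata
  set good : Fin N → Prop := fun i => (U i).Nonempty ∧
      ({x | Fin.append x (F x) ∈ Bf i} = U i ∧
        ∀ x ∈ U i, ∀ k, F x k = (∑ l, (L i k l : ℝ) * x l) + e i k) with hgood
  set Good : Finset (Fin N) := Finset.univ.filter good with hGood
  have hmemGood : ∀ i, i ∈ Good ↔ good i := by
    intro i; rw [hGood]; simp [Finset.mem_filter]
  have hD : Dense (⋂ i, (H i)ᶜ) := by
    apply dense_iInter_of_isOpen
    · intro i; exact (hHcl i).isOpen_compl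
    · intro i; exact interior_eq_empty_iff_dense_compl.mp (hHint i)
  have hDsub : (⋂ i, (H i)ᶜ) ⊆ ⋃ i ∈ Good, U i := by
    intro x hx
    have : Fin.append x (F x) ∈ Set.range fun x => Fin.append x (F x) := ⟨x, rfl⟩
    rw [hgraph] at this
    obtain ⟨i, hi⟩ := Set.mem_iUnion.mp this
    rcases hcase i with h | ⟨hPU, hform⟩
    · exfalso
      have hxH : x ∈ H i := h hi
      have := Set.mem_iInter.mp hx i
      exact this hxH
    · have hxU : x ∈ U i := by rw [← hPU]; exact hi
      have higood : i ∈ Good := (hmemGood i).mpr ⟨⟨x, hxU⟩, hPU, hform⟩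
      exact Set.mem_iUnion₂.mpr ⟨i, higood, hxU⟩
  have hcover : (⋃ i ∈ Good, closure (U i)) = Set.univ := by
    apply Set.eq_univ_of_univ_subset
    calc Set.univ = closure (⋂ i, (H i)ᶜ) := (hD.closure_eq).symm
    _ ⊆ closure (⋃ i ∈ Good, U i) := closure_mono hDsub
    _ = ⋃ i ∈ Good, closure (U i) := Good.closure_biUnion U
  have hGoodne : Good.Nonempty := by
    have h0 : (fun _ => (0:ℝ) : Fin n → ℝ) ∈ Set.univ := Set.mem_univ _
    rw [← hcover] at h0
    obtain ⟨i, hi, -⟩ := Set.mem_iUnion₂.mp h0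
    exact ⟨i, hi⟩
  set p := Good.card with hp
  have hppos : 0 < p := Finset.card_pos.mpr hGoodne
  set ρ := Good.orderIsoOfFin rfl with hρ
  refine ⟨p, hppos, fun s => L (ρ s).1, fun s => e (ρ s).1, fun s => U (ρ s).1, ?_, ?_, ?_, ?_, ?_⟩
  · intro s; exact hUopen _
  · intro s; exact hUconv _
  · intro s
    exact ((hmemGood _).mp (ρ s).2).1
  · apply Set.eq_univ_of_univ_subset
    rw [← hcover]
    intro x hx
    obtain ⟨i, hi, hxi⟩ := Set.mem_iUnion₂.mp hx
    obtain ⟨s, hs⟩ := ρ.surjective ⟨i, hi⟩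
    refine Set.mem_iUnion.mpr ⟨s, ?_⟩
    show x ∈ closure (U ((ρ s : {x // x ∈ Good}) : Fin N))
    rw [hs]
    exact hxi
  · intro s x hx k
    exact ((hmemGood _).mp (ρ s).2).2.2 x hx k

lemma stochastic_rows {n : ℕ} {F : (Fin n → ℝ) → Fin n → ℝ}
    (hmono : Monotone F) (hhom : AddHomog F) {U : Set (Fin n → ℝ)}
    (hUo : IsOpen U) (hUne : U.Nonempty) {A : Fin n → Fin n → ℚ} {b : Fin n → ℝ}
    (hform : ∀ x ∈ U, ∀ k, F x k = (∑ l, (A k l : ℝ) * x l) + b k) :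
    (∀ k l, 0 ≤ A k l) ∧ (∀ k, ∑ l, A k l = 1) := by
  obtain ⟨x0, hx0⟩ := hUne
  obtain ⟨ε, hε, hball⟩ := Metric.isOpen_iff.mp hUo x0 hx0
  set t : ℝ := ε / 2 with ht
  have htpos : 0 < t := by positivity
  have hmem : ∀ u : Fin n → ℝ, (∀ i, |u i| ≤ t) → (fun i => x0 i + u i) ∈ U := by
    intro u hu
    apply hball
    rw [Metric.mem_ball]
    apply lt_of_le_of_lt (dist_pi_le_iff (le_of_lt htpos) |>.mpr ?_) (by linarith)
    intro i
    rw [Real.dist_eq]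
    simpa using hu i
  constructor
  · -- nonnegativity
    intro k l0
    set x1 : Fin n → ℝ := fun i => x0 i + (if i = l0 then t else 0) with hx1
    have hx1U : x1 ∈ U := by
      apply hmem
      intro i
      by_cases hi : i = l0 <;> simp [hi, abs_of_nonneg, le_of_lt htpos]
    have hle : x0 ≤ x1 := by
      intro i
      by_cases hi : i = l0 <;> simp [hx1, hi, le_of_lt htpos]
    have hFle := hmono hle k
    rw [hform x0 hx0 k, hform x1 hx1U k] at hFle
    have hsum : ∑ l, (A k l : ℝ) * x1 l
        = (∑ l, (A k l : ℝ) * x0 l) + (A k l0 : ℝ) * t := by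
      have h1 : ∀ l ∈ Finset.univ (α := Fin n), (A k l : ℝ) * x1 l
          = (A k l : ℝ) * x0 l + (if l = l0 then (A k l0 : ℝ) * t else 0) := by
        intro l _
        by_cases hl : l = l0
        · subst hl; simp [hx1]; ring
        · simp [hx1, hl]
      rw [Finset.sum_congr rfl h1, Finset.sum_add_distrib, Finset.sum_ite_eq' Finset.univ l0]
      simp
    rw [hsum] at hFle
    have : 0 ≤ (A k l0 : ℝ) * t := by linarith
    have h0 : 0 ≤ (A k l0 : ℝ) := nonneg_of_mul_nonneg_right (by linarith : 0 ≤ t * (A k l0 : ℝ)) htpos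
    exact_mod_cast h0
  · -- rows sum to one
    intro k
    set x1 : Fin n → ℝ := fun i => t + x0 i with hx1
    have hx1U : x1 ∈ U := by
      have : x1 = fun i => x0 i + t := by funext i; rw [hx1]; ring
      rw [this]
      apply hmem
      intro i
      simp [abs_of_nonneg, le_of_lt htpos]
    have hhomk := congrFun (hhom t x0) k
    have h1 : F x1 k = t + F x0 k := hhomk
    rw [hform x0 hx0 k, hform x1 hx1U k] at h1
    have hsum : ∑ l, (A k l : ℝ) * x1 l
        = (∑ l, (A k l : ℝ) * x0 l) + (∑ l, (A k l : ℝ)) * t := by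
      rw [Finset.sum_mul, ← Finset.sum_add_distrib]
      apply Finset.sum_congr rfl
      intro l _
      rw [hx1]; ring
    rw [hsum] at h1
    have h2 : (∑ l, (A k l : ℝ)) * t = t := by linarith
    have h3 : (∑ l, (A k l : ℝ)) = 1 := by
      have := mul_right_cancel₀ (ne_of_gt htpos) (h2.trans (one_mul t).symm)
      exact this
    have h4 : ((∑ l, A k l : ℚ) : ℝ) = ((1:ℚ) : ℝ) := by push_cast; rw [h3]
    exact_mod_cast h4

lemma key_minmax {n p : ℕ} (f : (Fin n → ℝ) → ℝ) (AR : Fin p → Fin n → ℝ)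
    (br : Fin p → ℝ) (W : Fin p → Set (Fin n → ℝ))
    (hWcl : ∀ s, IsClosed (W s)) (hWconv : ∀ s, Convex ℝ (W s))
    (hWcover : (⋃ s, W s) = Set.univ)
    (ha : ∀ s, ∀ x ∈ W s, f x = (∑ l, AR s l * x l) + br s)
    (x y : Fin n → ℝ) :
    ∃ s, (∑ l, AR s l * x l) + br s ≤ f x ∧ f y ≤ (∑ l, AR s l * y l) + br s := by
  classical
  set γ : ℝ → (Fin n → ℝ) := fun τ l => x l + τ * (y l - x l) with hγ
  have hγcont : Continuous γ :=
    continuous_pi fun l => continuous_const.add (continuous_id.mul continuous_const)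
  have hγ0 : γ 0 = x := by funext l; simp [hγ]
  have hγ1 : γ 1 = y := by funext l; simp [hγ]
  set I : Fin p → Set ℝ := fun s => γ ⁻¹' (W s) with hI
  have hIcl : ∀ s, IsClosed (I s) := fun s => (hWcl s).preimage hγcont
  have hIconv : ∀ s, Convex ℝ (I s) := by
    intro s t1 h1 t2 h2 aθ bθ haθ hbθ hab
    show γ (aθ • t1 + bθ • t2) ∈ W s
    have : γ (aθ • t1 + bθ • t2) = aθ • γ t1 + bθ • γ t2 := by
      funext l
      simp only [hγ, Pi.add_apply, Pi.smul_apply, smul_eq_mul]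
      linear_combination (-(x l)) * hab
    rw [this]
    exact hWconv s h1 h2 haθ hbθ hab
  have hcov : Set.Icc (0:ℝ) 1 ⊆ ⋃ s ∈ (Finset.univ : Finset (Fin p)), I s := by
    intro τ _
    have : γ τ ∈ Set.univ := Set.mem_univ _
    rw [← hWcover] at this
    obtain ⟨s, hs⟩ := Set.mem_iUnion.mp this
    exact Set.mem_iUnion₂.mpr ⟨s, Finset.mem_univ s, hs⟩
  obtain ⟨N, t, σ, hN, ht0, htN, htmono, hseg⟩ :=
    chain_cover I hIcl hIconv Finset.univ 0 1 zero_le_one hcov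
  set α : ℕ → ℝ := fun j => (∑ l, AR (σ j) l * x l) + br (σ j) with hα
  set β : ℕ → ℝ := fun j => ∑ l, AR (σ j) l * (y l - x l) with hβ
  have haffγ : ∀ s τ, (∑ l, AR s l * γ τ l) + br s
      = ((∑ l, AR s l * x l) + br s) + τ * (∑ l, AR s l * (y l - x l)) := by
    intro s τ
    rw [Finset.mul_sum]
    have h1 : ∀ l ∈ Finset.univ (α := Fin n),
        AR s l * γ τ l = AR s l * x l + τ * (AR s l * (y l - x l)) := by
      intro l _
      simp only [hγ]
      ring
    rw [Finset.sum_congr rfl h1, Finset.sum_add_distrib]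
    ring
  have hmatch : ∀ j, j + 1 < N → α j + β j * t (j+1) = α (j+1) + β (j+1) * t (j+1) := by
    intro j hj
    have hj1 : t (j+1) ∈ I (σ j) := by
      apply hseg j (by omega)
      exact ⟨htmono j, le_refl _⟩
    have hj2 : t (j+1) ∈ I (σ (j+1)) := by
      apply hseg (j+1) hj
      exact ⟨le_refl _, htmono (j+1)⟩
    have e1 : f (γ (t (j+1))) = (∑ l, AR (σ j) l * γ (t (j+1)) l) + br (σ j) := ha _ _ hj1
    have e2 : f (γ (t (j+1))) = (∑ l, AR (σ (j+1)) l * γ (t (j+1)) l) + br (σ (j+1)) :=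
      ha _ _ hj2
    have := e1.symm.trans e2
    rw [haffγ, haffγ] at this
    simpa [hα, hβ, mul_comm] using this
  obtain ⟨j, hjN, hj0, hjN'⟩ := chain1d N hN t α β htmono hmatch
  rw [ht0] at hj0
  rw [htN] at hjN'
  have hj0' : α j ≤ α 0 := by simpa using hj0
  have hjN'' : α (N-1) + β (N-1) * 1 ≤ α j + β j * 1 := by simpa using hjN'
  have hx0 : x ∈ W (σ 0) := by
    have h00 : (0:ℝ) ∈ I (σ 0) := by
      apply hseg 0 hN
      exact ⟨le_of_eq ht0, ht0 ▸ htmono 0⟩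
    rw [← hγ0]
    exact h00
  have hyN : y ∈ W (σ (N-1)) := by
    have h1 : (1:ℝ) ∈ I (σ (N-1)) := by
      apply hseg (N-1) (by omega)
      constructor
      · rw [← htN]; exact tmono_aux t htmono (N-1) N (by omega)
      · have : N - 1 + 1 = N := by omega
        rw [this, htN]
    rw [← hγ1]
    exact h1
  refine ⟨σ j, ?_, ?_⟩
  · have hfx : f x = α 0 := by
      rw [ha _ _ hx0]
    calc (∑ l, AR (σ j) l * x l) + br (σ j) = α j := rfl
    _ ≤ α 0 := hj0'
    _ = f x := hfx.symm
  · have hfy : f y = α (N-1) + β (N-1) * 1 := by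
      rw [ha _ _ hyN]
      have := haffγ (σ (N-1)) 1
      rw [hγ1] at this
      rw [this]
      simp [hα, hβ]
    have hy2 : (∑ l, AR (σ j) l * y l) + br (σ j) = α j + β j * 1 := by
      have := haffγ (σ j) 1
      rw [hγ1] at this
      rw [this]
      simp [hα, hβ]
    rw [hfy, hy2]
    exact hjN''

end Aux

theorem stmt12 {n : ℕ} (F : (Fin n → ℝ) → Fin n → ℝ)
    (hsl : SemilinearFun F) (hmono : Monotone F) (hhom : AddHomog F) :
    ∃ (p : ℕ) (_ : 0 < p) (A : Fin p → Fin n → Fin n → ℚ) (b : Fin p → Fin n → ℝ),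
      (∀ s k l, 0 ≤ A s k l) ∧ (∀ s k, ∑ l, A s k l = 1) ∧
      ∃ (M : Fin n → ℕ) (hM : ∀ k, 0 < M k)
        (Ss : ∀ k : Fin n, Fin (M k) → Finset (Fin p))
        (hS : ∀ k i, (Ss k i).Nonempty),
        ∀ x k, F x k =
          Finset.univ.inf' ⟨⟨0, hM k⟩, Finset.mem_univ _⟩ (fun i =>
            (Ss k i).sup' (hS k i)
              (fun s => (∑ l, (A s k l : ℝ) * x l) + b s k)) := by
  classical
  obtain ⟨p, hp, A, b, U, hUopen, hUconv, hUne, hUcover, hform⟩ := pieces F hsl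
  set W : Fin p → Set (Fin n → ℝ) := fun s => closure (U s) with hW
  have hWcl : ∀ s, IsClosed (W s) := fun s => isClosed_closure
  have hWconv : ∀ s, Convex ℝ (W s) := fun s => (hUconv s).closure
  have hWcover : (⋃ s, W s) = Set.univ := hUcover
  set aff : Fin n → Fin p → (Fin n → ℝ) → ℝ :=
    fun k s x => (∑ l, (A s k l : ℝ) * x l) + b s k with haffdef
  have haW : ∀ k s, ∀ x ∈ W s, F x k = aff k s x := by
    intro k s
    have heq : Set.EqOn (fun x => F x k) (fun x => (∑ l, (A s k l : ℝ) * x l) + b s k)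
        (closure (U s)) := by
      apply Set.EqOn.closure (fun x hx => hform s x hx k)
        (F_continuous hmono hhom k) (continuous_aff _ _)
    intro x hx
    exact heq hx
  have hstoch : ∀ s, (∀ k l, 0 ≤ A s k l) ∧ (∀ k, ∑ l, A s k l = 1) :=
    fun s => stochastic_rows hmono hhom (hUopen s) (hUne s) (hform s)
  have key : ∀ (k : Fin n) (x y : Fin n → ℝ),
      ∃ s, aff k s x ≤ F x k ∧ F y k ≤ aff k s y := by
    intro k x y
    obtain ⟨s, h1, h2⟩ := key_minmax (fun x => F x k) (fun s l => (A s k l : ℝ))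
      (fun s => b s k) W hWcl hWconv hWcover (fun s x hx => haW k s x hx) x y
    exact ⟨s, h1, h2⟩
  -- the collection of admissible subsets
  set Q : Fin n → Finset (Fin p) → Prop := fun k S =>
    S.Nonempty ∧ ∀ x, ∃ s ∈ S, F x k ≤ aff k s x with hQ
  set 𝒞 : Fin n → Finset (Finset (Fin p)) := fun k => Finset.univ.filter (Q k) with h𝒞
  have hmem𝒞 : ∀ k S, S ∈ 𝒞 k ↔ Q k S := by
    intro k S; rw [h𝒞]; simp [Finset.mem_filter]
  set T : Fin n → (Fin n → ℝ) → Finset (Fin p) :=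
    fun k z => Finset.univ.filter (fun s => aff k s z ≤ F z k) with hT
  have hTfacts : ∀ k z, T k z ∈ 𝒞 k ∧ (∃ s ∈ T k z, F z k ≤ aff k s z) := by
    intro k z
    have hzW : ∃ s, z ∈ W s := by
      have : z ∈ Set.univ := Set.mem_univ _
      rw [← hWcover] at this
      exact Set.mem_iUnion.mp this
    obtain ⟨s0, hs0⟩ := hzW
    have hs0T : s0 ∈ T k z := by
      rw [hT]
      simp only [Finset.mem_filter, Finset.mem_univ, true_and]
      exact le_of_eq (haW k s0 z hs0).symm
    have hQT : Q k (T k z) := by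
      constructor
      · exact ⟨s0, hs0T⟩
      · intro x
        obtain ⟨s, h1, h2⟩ := key k z x
        refine ⟨s, ?_, h2⟩
        rw [hT]
        simp only [Finset.mem_filter, Finset.mem_univ, true_and]
        exact h1
    refine ⟨(hmem𝒞 k _).mpr hQT, ?_⟩
    obtain ⟨s, hsT, hs⟩ := hQT.2 z
    exact ⟨s, hsT, hs⟩
  have h𝒞ne : ∀ k, (𝒞 k).Nonempty := fun k => ⟨T k 0, (hTfacts k 0).1⟩
  refine ⟨p, hp, A, b, fun s => (hstoch s).1, fun s => (hstoch s).2,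
    fun k => (𝒞 k).card, fun k => Finset.card_pos.mpr (h𝒞ne k),
    fun k i => (((𝒞 k).equivFin.symm) i).1,
    fun k i => ((hmem𝒞 k _).mp (((𝒞 k).equivFin.symm) i).2).1, ?_⟩
  intro x k
  apply le_antisymm
  · -- F x k ≤ inf'
    apply Finset.le_inf'
    intro i _
    have hQi : Q k (((𝒞 k).equivFin.symm i).1) :=
      (hmem𝒞 k _).mp ((((𝒞 k).equivFin.symm) i)).2
    obtain ⟨s, hsmem, hs⟩ := hQi.2 x
    have hs' : F x k ≤ (∑ l, (A s k l : ℝ) * x l) + b s k := by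
      rw [haffdef] at hs; exact hs
    exact le_trans hs'
      (Finset.le_sup' (fun s => (∑ l, (A s k l : ℝ) * x l) + b s k) hsmem)
  · -- inf' ≤ F x k
    obtain ⟨i0, hi0⟩ := ((𝒞 k).equivFin.symm).surjective ⟨T k x, (hTfacts k x).1⟩
    have hTval : (T k x).sup' ((hmem𝒞 k _).mp (hTfacts k x).1).1
        (fun s => (∑ l, (A s k l : ℝ) * x l) + b s k) = F x k := by
      apply le_antisymm
      · apply Finset.sup'_le
        intro s hs
        rw [hT] at hs
        simp only [Finset.mem_filter, Finset.mem_univ, true_and] at hs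
        exact hs
      · obtain ⟨s, hsT, hs⟩ := (hTfacts k x).2
        have hs' : F x k ≤ (∑ l, (A s k l : ℝ) * x l) + b s k := by
          rw [haffdef] at hs; exact hs
        exact le_trans hs'
          (Finset.le_sup' (fun s => (∑ l, (A s k l : ℝ) * x l) + b s k) hsT)
    have hterm : ((((𝒞 k).equivFin.symm) i0)).1 = T k x := by rw [hi0]
    have hle := Finset.inf'_le (b := i0)
      (fun i => ((((𝒞 k).equivFin.symm) i)).1.sup'
        ((hmem𝒞 k _).mp (((𝒞 k).equivFin.symm i)).2).1
        (fun s => (∑ l, (A s k l : ℝ) * x l) + b s k))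
      (Finset.mem_univ i0)
    have hfi0 : ((((𝒞 k).equivFin.symm) i0)).1.sup'
        ((hmem𝒞 k _).mp (((𝒞 k).equivFin.symm i0)).2).1
        (fun s => (∑ l, (A s k l : ℝ) * x l) + b s k) = F x k := by
      rw [← hTval]
      exact Finset.sup'_congr _ hterm (fun _ _ => rfl)
    exact le_of_le_of_eq hle hfi0
end

section
/- Let F : ℝⁿ → ℝ^m be continuous and semilinear. Then F is piecewise affine; more precisely, F admits a piecewise description (W⁽ˢ⁾, A⁽ˢ⁾, b⁽ˢ⁾)_{s∈[p]} in which each piece W⁽ˢ⁾ is a semilinear polyhedron, i.e., of the form {x ∈ ℝⁿ : Cx ≥ d} with C a rational matrix and d a real vector, and each matrix A⁽ˢ⁾ has rational entries. -/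
open Finset

-- ===== auxiliary material =====
open MeasureTheory

section Aux
variable {n : ℕ}

noncomputable def sumLin (l : Fin n → ℝ) : (Fin n → ℝ) →ₗ[ℝ] ℝ where
  toFun := fun x => ∑ j, l j * x j
  map_add' := by intro x y; simp [mul_add, Finset.sum_add_distrib]
  map_smul' := by
    intro c x; simp [Finset.mul_sum]
    exact Finset.sum_congr rfl fun j _ => by ring

lemma hyperplane_volume_zero (l : Fin n → ℝ) (c : ℝ) (hl : l ≠ 0) :
    volume {x : Fin n → ℝ | ∑ j, l j * x j = c} = 0 := by
  obtain ⟨j0, hj0⟩ : ∃ j, l j ≠ 0 := by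
    by_contra h; push_neg at h; exact hl (funext h)
  set x0 : Fin n → ℝ := fun j => if j = j0 then c / l j0 else 0 with hx0
  have hx0mem : ∑ j, l j * x0 j = c := by
    rw [Finset.sum_eq_single j0]
    · simp [hx0]; field_simp
    · intros b _ hb; simp [hx0, hb]
    · simp
  set s : AffineSubspace ℝ (Fin n → ℝ) := AffineSubspace.mk' x0 (LinearMap.ker (sumLin l)) with hs
  have hsub : {x : Fin n → ℝ | ∑ j, l j * x j = c} ⊆ (s : Set (Fin n → ℝ)) := by
    intro x hx
    rw [hs]
    refine AffineSubspace.vsub_right_mem_direction_iff_mem (AffineSubspace.self_mem_mk' _ _) x |>.1 ?_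
    simp only [AffineSubspace.direction_mk', LinearMap.mem_ker, vsub_eq_sub]
    simp [sumLin, mul_sub, Finset.sum_sub_distrib, hx.out, hx0mem]
  have hne : s ≠ ⊤ := by
    intro h
    have : (x0 + fun j => if j = j0 then 1/ l j0 else 0) ∈ s := h ▸ AffineSubspace.mem_top ℝ _ _
    rw [hs, AffineSubspace.mem_mk'] at this
    simp only [vsub_eq_sub, add_sub_cancel_left, LinearMap.mem_ker] at this
    rw [show (sumLin l fun j => if j = j0 then 1/l j0 else 0) = 1 from ?_] at this
    · exact one_ne_zero this
    · show ∑ j, l j * _ = 1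
      rw [Finset.sum_eq_single j0]
      · simp; field_simp
      · intros b _ hb; simp [hb]
      · simp
  exact measure_mono_null hsub (Measure.addHaar_affineSubspace volume s hne)

end Aux

lemma subst_calc {n m : ℕ} (r : Fin (n+m) → ℝ) (x : Fin n → ℝ)
    (A : Fin m → Fin n → ℝ) (bv : Fin m → ℝ) :
    ∑ j, r j * Fin.append x (fun k => (∑ j', A k j' * x j') + bv k) j
      = (∑ j, (r (Fin.castAdd m j) + ∑ k, r (Fin.natAdd n k) * A k j) * x j)
        + ∑ k, r (Fin.natAdd n k) * bv k := by
  rw [Fin.sum_univ_add]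
  simp only [Fin.append_left, Fin.append_right]
  have h : ∀ j, (r (Fin.castAdd m j) + ∑ k, r (Fin.natAdd n k) * A k j) * x j
      = r (Fin.castAdd m j) * x j + ∑ k, r (Fin.natAdd n k) * (A k j * x j) := by
    intro j; rw [add_mul, Finset.sum_mul]
    exact congrArg _ (Finset.sum_congr rfl fun k _ => by ring)
  simp only [h, Finset.sum_add_distrib, mul_add, Finset.mul_sum]
  rw [Finset.sum_comm]
  ring

lemma pieceAnalysis {n m : ℕ} (F : (Fin n → ℝ) → Fin m → ℝ)
    (S : Set (Fin (n+m) → ℝ)) (hb : BasicSemilinear S)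
    (hsub : S ⊆ Set.range fun x => Fin.append x (F x)) :
    ∃ (q' : ℕ) (P : Fin q' → Fin n → ℚ) (pv : Fin q' → ℝ)
      (A : Fin m → Fin n → ℚ) (bv : Fin m → ℝ) (l : Fin n → ℚ) (cc : ℝ),
      ((∃ j, l j ≠ 0) ∧ {x | Fin.append x (F x) ∈ S} ⊆ {x | ∑ j, (l j : ℝ) * x j = cc})
      ∨ ({x | Fin.append x (F x) ∈ S} = {x | ∀ e, pv e < ∑ j, (P e j : ℝ) * x j}
         ∧ ∀ x, Fin.append x (F x) ∈ S → ∀ k, F x k = (∑ j, (A k j : ℝ) * x j) + bv k) := by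
  obtain ⟨pp, qq, Am, bm, Cm, cm, hS⟩ := hb
  by_cases hne : ∃ x : Fin n → ℝ, Fin.append x (F x) ∈ S
  case neg =>
    refine ⟨1, 0, 1, 0, 0, 0, 0, Or.inr ⟨?_, ?_⟩⟩
    · ext x; simp only [Set.mem_setOf_eq]
      constructor
      · intro h; exact absurd ⟨x, h⟩ hne
      · intro h; exfalso
        have := h 0
        simp at this
        exact absurd this (by norm_num)
    · intro x hx; exact absurd ⟨x, hx⟩ hne
  obtain ⟨xs, hxs⟩ := hne
  have hxs' : (∀ a, ∑ j, (Am a j : ℝ) * Fin.append xs (F xs) j > bm a) ∧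
      (∀ e, ∑ j, (Cm e j : ℝ) * Fin.append xs (F xs) j = cm e) := by
    rw [hS] at hxs; exact hxs
  -- Step 1: real injectivity of the y-columns of Cm
  have hCy : ∀ w : Fin m → ℝ,
      (∀ e, ∑ k, (Cm e (Fin.natAdd n k) : ℝ) * w k = 0) → w = 0 := by
    intro w hw
    set zs := Fin.append xs (F xs) with hzs
    set v : Fin (n+m) → ℝ := Fin.append 0 w with hv
    set O : Set ℝ :=
      ⋂ a, (fun ε : ℝ => ∑ j, (Am a j : ℝ) * (zs j + ε * v j)) ⁻¹' Set.Ioi (bm a) with hO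
    have hOopen : IsOpen O := by
      refine isOpen_iInter_of_finite fun a => IsOpen.preimage ?_ isOpen_Ioi
      exact continuous_finset_sum _ fun j _ => by fun_prop
    have h0 : (0 : ℝ) ∈ O := by
      rw [hO]
      simp only [Set.mem_iInter, Set.mem_preimage, Set.mem_Ioi]
      intro a; simpa using hxs'.1 a
    obtain ⟨δ, hδ, hball⟩ := Metric.isOpen_iff.1 hOopen 0 h0
    have hε : (δ/2 : ℝ) ∈ O := by
      apply hball
      rw [Metric.mem_ball, Real.dist_eq]
      rw [abs_of_nonneg (by linarith)]
      linarith
    have hεne : (δ/2 : ℝ) ≠ 0 := by positivity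
    have hmem : (fun j => zs j + (δ/2) * v j) ∈ S := by
      rw [hS]
      constructor
      · intro a
        have := Set.mem_iInter.1 hε a
        exact this
      · intro e
        have hsplit : ∑ j, (Cm e j : ℝ) * (zs j + (δ/2) * v j)
            = ∑ j, (Cm e j : ℝ) * zs j + (δ/2) * ∑ j, (Cm e j : ℝ) * v j := by
          rw [Finset.mul_sum, ← Finset.sum_add_distrib]
          exact Finset.sum_congr rfl fun j _ => by ring
        have hv0 : ∑ j, (Cm e j : ℝ) * v j = 0 := by
          rw [Fin.sum_univ_add]
          simp [hv, Fin.append_left, Fin.append_right, hw e]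
        rw [hsplit, hv0, mul_zero, add_zero]
        exact hxs'.2 e
    obtain ⟨x', hx'⟩ := hsub hmem
    have hxx : x' = xs := by
      funext j
      have := congrFun hx' (Fin.castAdd m j)
      simpa [Fin.append_left, hv, hzs] using this
    funext k
    have h2 := congrFun hx' (Fin.natAdd n k)
    rw [hxx] at h2
    simp only [Fin.append_right, hv, hzs] at h2
    have : (δ/2) * w k = 0 := by linarith
    rcases mul_eq_zero.1 this with h | h
    · exact absurd h hεne
    · simpa using h
  -- Step 2: rational left inverse of the y-column matrix
  set Cy : Matrix (Fin qq) (Fin m) ℚ := Matrix.of fun e k => Cm e (Fin.natAdd n k) with hCydef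
  have hker : LinearMap.ker (Matrix.mulVecLin Cy) = ⊥ := by
    rw [LinearMap.ker_eq_bot']
    intro w hw
    have hw' : ∀ e, ∑ k, (Cm e (Fin.natAdd n k) : ℝ) * ((w k : ℝ)) = 0 := by
      intro e
      have := congrFun hw e
      simp only [Matrix.mulVecLin_apply, Matrix.mulVec, dotProduct, Pi.zero_apply] at this
      have : ((∑ k, Cy e k * w k : ℚ) : ℝ) = 0 := by rw [this]; norm_cast
      push_cast at this
      simpa [hCydef] using this
    have h0 := hCy (fun k => (w k : ℝ)) hw'
    funext k
    have := congrFun h0 k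
    simp only [Pi.zero_apply] at this ⊢
    exact_mod_cast this
  obtain ⟨g, hg⟩ := LinearMap.exists_leftInverse_of_injective _ hker
  set L : Matrix (Fin m) (Fin qq) ℚ := LinearMap.toMatrix' g with hLdef
  have hLmul : ∀ v, L.mulVec v = g v := by
    intro v
    rw [← Matrix.toLin'_apply L v, hLdef, Matrix.toLin'_toMatrix']
  have hL : ∀ k k', ∑ e, L k e * Cy e k' = if k = k' then 1 else 0 := by
    intro k k'
    have h1 : Cy.mulVec (Pi.single k' 1) = fun e => Cy e k' := by
      rw [Matrix.mulVec_single]; simp; rfl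
    have h2 := LinearMap.ext_iff.1 hg (Pi.single k' (1:ℚ))
    simp only [LinearMap.coe_comp, Function.comp_apply, LinearMap.id_coe, id_eq] at h2
    calc ∑ e, L k e * Cy e k' = L.mulVec (fun e => Cy e k') k := by
          simp [Matrix.mulVec, dotProduct]
      _ = g (Matrix.mulVecLin Cy (Pi.single k' (1:ℚ))) k := by
          rw [hLmul, ← h1, Matrix.mulVecLin_apply]
      _ = (Pi.single k' (1:ℚ) : Fin m → ℚ) k := by rw [h2]
      _ = if k = k' then 1 else 0 := by rw [Pi.single_apply]
  -- Step 3: the affine formula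
  set A : Fin m → Fin n → ℚ := fun k j => -∑ e, L k e * Cm e (Fin.castAdd m j) with hA
  set bv : Fin m → ℝ := fun k => ∑ e, (L k e : ℝ) * cm e with hbv
  have key : ∀ (x : Fin n → ℝ) (y : Fin m → ℝ),
      (∀ e, ∑ j, (Cm e j : ℝ) * Fin.append x y j = cm e) →
      ∀ k, y k = (∑ j, (A k j : ℝ) * x j) + bv k := by
    intro x y hy k
    have heq : ∀ e, (∑ j, (Cm e (Fin.castAdd m j) : ℝ) * x j)
        + ∑ k', ((Cy e k' : ℚ) : ℝ) * y k' = cm e := by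
      intro e
      have := hy e
      rw [Fin.sum_univ_add] at this
      simpa [Fin.append_left, Fin.append_right, hCydef] using this
    calc y k = ∑ k', (if k = k' then (1:ℝ) else 0) * y k' := by
          rw [Finset.sum_eq_single k (fun b _ hb => by simp [Ne.symm hb])
            (fun h => absurd (Finset.mem_univ k) h)]
          simp
      _ = ∑ k', (((∑ e, L k e * Cy e k' : ℚ)) : ℝ) * y k' := by
          refine Finset.sum_congr rfl fun k' _ => ?_
          rw [hL k k']
          by_cases h : k = k' <;> simp [h]
      _ = ∑ e, (L k e : ℝ) * (∑ k', ((Cy e k' : ℚ) : ℝ) * y k') := by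
          push_cast
          simp only [Finset.sum_mul, Finset.mul_sum]
          rw [Finset.sum_comm]
          exact Finset.sum_congr rfl fun e _ => Finset.sum_congr rfl fun k' _ => by ring
      _ = ∑ e, (L k e : ℝ) * (cm e - ∑ j, (Cm e (Fin.castAdd m j) : ℝ) * x j) := by
          refine Finset.sum_congr rfl fun e _ => ?_
          congr 1
          linarith [heq e]
      _ = (∑ j, (A k j : ℝ) * x j) + bv k := by
          simp only [mul_sub, Finset.sum_sub_distrib]
          have hswap : ∑ e, (L k e : ℝ) * (∑ j, (Cm e (Fin.castAdd m j) : ℝ) * x j)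
              = ∑ j, (∑ e, (L k e : ℝ) * (Cm e (Fin.castAdd m j) : ℝ)) * x j := by
            simp only [Finset.mul_sum, Finset.sum_mul]
            rw [Finset.sum_comm]
            exact Finset.sum_congr rfl fun j _ => Finset.sum_congr rfl fun e _ => by ring
          rw [hswap]
          have hAc : ∀ j, ((A k j : ℚ) : ℝ)
              = -(∑ e, (L k e : ℝ) * (Cm e (Fin.castAdd m j) : ℝ)) := by
            intro j; simp only [hA]; push_cast; ring
          simp only [hAc, hbv, neg_mul, Finset.sum_neg_distrib]
          ring
  -- Step 4: substituted description of the projection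
  set P : Fin pp → Fin n → ℚ :=
    fun a j => Am a (Fin.castAdd m j) + ∑ k, Am a (Fin.natAdd n k) * A k j with hP
  set pv : Fin pp → ℝ :=
    fun a => bm a - ∑ k, (Am a (Fin.natAdd n k) : ℝ) * bv k with hpv
  set Q : Fin qq → Fin n → ℚ :=
    fun e j => Cm e (Fin.castAdd m j) + ∑ k, Cm e (Fin.natAdd n k) * A k j with hQ
  set qv : Fin qq → ℝ :=
    fun e => cm e - ∑ k, (Cm e (Fin.natAdd n k) : ℝ) * bv k with hqv
  have hsubst : ∀ (r : Fin (n+m) → ℚ) (x : Fin n → ℝ),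
      ∑ j, (r j : ℝ) * Fin.append x (fun k => (∑ j', (A k j' : ℝ) * x j') + bv k) j
        = (∑ j, ((r (Fin.castAdd m j) : ℝ)
            + ∑ k, (r (Fin.natAdd n k) : ℝ) * (A k j : ℝ)) * x j)
          + ∑ k, (r (Fin.natAdd n k) : ℝ) * bv k :=
    fun r x => subst_calc (fun j => (r j : ℝ)) x (fun k j => (A k j : ℝ)) bv
  have hPcast : ∀ a (x : Fin n → ℝ), ∑ j, (P a j : ℝ) * x j
      = ∑ j, ((Am a (Fin.castAdd m j) : ℝ)
          + ∑ k, (Am a (Fin.natAdd n k) : ℝ) * (A k j : ℝ)) * x j := by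
    intro a x
    refine Finset.sum_congr rfl fun j _ => ?_
    simp only [hP]; push_cast; ring
  have hQcast : ∀ e (x : Fin n → ℝ), ∑ j, (Q e j : ℝ) * x j
      = ∑ j, ((Cm e (Fin.castAdd m j) : ℝ)
          + ∑ k, (Cm e (Fin.natAdd n k) : ℝ) * (A k j : ℝ)) * x j := by
    intro e x
    refine Finset.sum_congr rfl fun j _ => ?_
    simp only [hQ]; push_cast; ring
  have hchar : ∀ x : Fin n → ℝ, Fin.append x (F x) ∈ S ↔
      ((∀ a, pv a < ∑ j, (P a j : ℝ) * x j) ∧ (∀ e, ∑ j, (Q e j : ℝ) * x j = qv e)) := by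
    intro x
    constructor
    · intro hx
      rw [hS] at hx
      have hFx : F x = fun k => (∑ j', (A k j' : ℝ) * x j') + bv k :=
        funext (key x (F x) hx.2)
      constructor
      · intro a
        have h1 := hx.1 a
        rw [hFx, hsubst (Am a) x] at h1
        rw [hPcast, hpv]
        dsimp only
        linarith
      · intro e
        have h1 := hx.2 e
        rw [hFx, hsubst (Cm e) x] at h1
        rw [hQcast, hqv]
        dsimp only
        linarith
    · rintro ⟨h1, h2⟩
      set y : Fin m → ℝ := fun k => (∑ j', (A k j' : ℝ) * x j') + bv k with hy
      have hyS : Fin.append x y ∈ S := by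
        rw [hS]
        constructor
        · intro a
          rw [hy, hsubst (Am a) x]
          have := h1 a
          rw [hPcast, hpv] at this
          dsimp only at this
          linarith
        · intro e
          rw [hy, hsubst (Cm e) x]
          have := h2 e
          rw [hQcast, hqv] at this
          dsimp only at this
          linarith
      obtain ⟨x', hx'⟩ := hsub hyS
      have hxx : x' = x := by
        funext j
        have := congrFun hx' (Fin.castAdd m j)
        simpa [Fin.append_left] using this
      rw [hxx] at hx'
      have hFy : F x = y := by
        funext k
        have := congrFun hx' (Fin.natAdd n k)
        simpa [Fin.append_right] using this
      rw [show Fin.append x (F x) = Fin.append x y from by rw [hFy]]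
      exact hyS
  -- Step 5: case split on the reduced equality rows
  by_cases hQ0 : ∃ e j, Q e j ≠ 0
  · obtain ⟨e, hj⟩ := hQ0
    refine ⟨pp, P, pv, A, bv, Q e, qv e, Or.inl ⟨hj, ?_⟩⟩
    intro x hx
    exact ((hchar x).1 hx).2 e
  · push_neg at hQ0
    refine ⟨pp, P, pv, A, bv, 0, 0, Or.inr ⟨?_, ?_⟩⟩
    · ext x
      rw [Set.mem_setOf_eq, hchar x]
      simp only [Set.mem_setOf_eq]
      constructor
      · exact fun h => h.1
      · intro h
        refine ⟨h, fun e => ?_⟩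
        have hz : ∀ z : Fin n → ℝ, ∑ j, (Q e j : ℝ) * z j = 0 := by
          intro z
          refine Finset.sum_eq_zero fun j _ => by simp [hQ0 e j]
        have hqv0 := ((hchar xs).1 hxs).2 e
        rw [hz xs] at hqv0
        rw [hz x, ← hqv0]
    · intro x hx k
      rw [hS] at hx
      exact key x (F x) hx.2 k

theorem stmt13 {n m : ℕ} (F : (Fin n → ℝ) → Fin m → ℝ)
    (hcont : Continuous F) (hsl : SemilinearFun F) :
    ∃ (p : ℕ) (W : Fin p → Set (Fin n → ℝ)) (A : Fin p → Fin m → Fin n → ℝ)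
      (b : Fin p → Fin m → ℝ),
      IsPiecewiseDescription F p W A b ∧
      (∀ s, ∃ (q : ℕ) (C : Fin q → Fin n → ℚ) (d : Fin q → ℝ),
          W s = {x | ∀ i, d i ≤ ∑ j, (C i j : ℝ) * x j}) ∧
      (∀ s k j, ∃ r : ℚ, A s k j = (r : ℝ)) := by
  classical
  obtain ⟨N, f, hbasic, hG⟩ := hsl
  have hsub : ∀ i, f i ⊆ Set.range fun x => Fin.append x (F x) := by
    intro i
    rw [hG]
    exact Set.subset_iUnion f i
  choose q' P pv A bv l cc halt using fun i =>
    pieceAnalysis F (f i) (hbasic i) (hsub i)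
  have hcover : ∀ x : Fin n → ℝ, ∃ i, Fin.append x (F x) ∈ f i := by
    intro x
    have : Fin.append x (F x) ∈ ⋃ i, f i := by
      rw [← hG]; exact ⟨x, rfl⟩
    exact Set.mem_iUnion.1 this
  set pred : Fin N → Prop := fun i =>
    (∃ x : Fin n → ℝ, Fin.append x (F x) ∈ f i) ∧
    {x | Fin.append x (F x) ∈ f i} = {x | ∀ e, pv i e < ∑ j, (P i e j : ℝ) * x j} ∧
    (∀ x, Fin.append x (F x) ∈ f i → ∀ k, F x k = (∑ j, (A i k j : ℝ) * x j) + bv i k)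
    with hpreddef
  set I : Finset (Fin N) := Finset.univ.filter pred with hI
  -- closed pieces
  set Wb : Fin N → Set (Fin n → ℝ) :=
    fun i => {x | ∀ e, pv i e ≤ ∑ j, (P i e j : ℝ) * x j} with hWb
  have hWbclosed : ∀ i, IsClosed (Wb i) := by
    intro i
    have : Wb i = ⋂ e, {x : Fin n → ℝ | pv i e ≤ ∑ j, (P i e j : ℝ) * x j} := by
      ext x; simp [hWb, Set.mem_iInter]
    rw [this]
    exact isClosed_iInter fun e =>
      isClosed_le continuous_const (continuous_finset_sum _ fun j _ => by fun_prop)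
  have hVopen : ∀ i, IsOpen {x : Fin n → ℝ | ∀ e, pv i e < ∑ j, (P i e j : ℝ) * x j} := by
    intro i
    have : {x : Fin n → ℝ | ∀ e, pv i e < ∑ j, (P i e j : ℝ) * x j}
        = ⋂ e, {x : Fin n → ℝ | pv i e < ∑ j, (P i e j : ℝ) * x j} := by
      ext x; simp [Set.mem_iInter]
    rw [this]
    exact isOpen_iInter_of_finite fun e =>
      isOpen_lt continuous_const (continuous_finset_sum _ fun j _ => by fun_prop)
  -- covering
  have hT : (⋃ i ∈ I, Wb i) = Set.univ := by
    by_contra hne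
    have hopen : IsOpen (⋃ i ∈ I, Wb i)ᶜ :=
      (Set.Finite.isClosed_biUnion I.finite_toSet fun i _ => hWbclosed i).isOpen_compl
    have hnonempty : ((⋃ i ∈ I, Wb i)ᶜ).Nonempty := by
      rw [Set.nonempty_compl]
      exact fun h => hne h
    have hsubhyp : (⋃ i ∈ I, Wb i)ᶜ ⊆
        ⋃ i, {x : Fin n → ℝ | (∃ j, l i j ≠ 0) ∧ ∑ j, (l i j : ℝ) * x j = cc i} := by
      intro x hx
      obtain ⟨i, hi⟩ := hcover x
      have hiI : i ∉ I := by
        intro hiI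
        apply hx
        refine Set.mem_biUnion hiI ?_
        have hpredi : pred i := (Finset.mem_filter.1 hiI).2
        have := hpredi.2.1 ▸ (show x ∈ {x | Fin.append x (F x) ∈ f i} from hi)
        intro e
        exact le_of_lt (this e)
      have hnotpred : ¬ pred i := fun hp => hiI (Finset.mem_filter.2 ⟨Finset.mem_univ i, hp⟩)
      rcases halt i with ⟨hl0, hhyp⟩ | ⟨hset, haff⟩
      · refine Set.mem_iUnion.2 ⟨i, hl0, hhyp hi⟩
      · exact absurd ⟨⟨x, hi⟩, hset, haff⟩ hnotpred
    have hzero : volume ((⋃ i ∈ I, Wb i)ᶜ) = 0 := by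
      refine measure_mono_null hsubhyp (measure_iUnion_null fun i => ?_)
      by_cases h0 : ∃ j, l i j ≠ 0
      · refine measure_mono_null (fun x hx => hx.2) ?_
        refine hyperplane_volume_zero (fun j => ((l i j : ℚ) : ℝ)) (cc i) ?_
        obtain ⟨j, hj⟩ := h0
        intro hll
        have hcj := congrFun hll j
        simp only [Pi.zero_apply] at hcj
        exact hj (by exact_mod_cast hcj)
      · have : {x : Fin n → ℝ | (∃ j, l i j ≠ 0) ∧ ∑ j, (l i j : ℝ) * x j = cc i} = ∅ := by
          ext x; simp only [Set.mem_setOf_eq, Set.mem_empty_iff_false, iff_false]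
          rintro ⟨hj, -⟩; exact h0 hj
        rw [this]; exact measure_empty
    have hpos : 0 < volume ((⋃ i ∈ I, Wb i)ᶜ) := hopen.measure_pos volume hnonempty
    rw [hzero] at hpos
    exact lt_irrefl 0 hpos
  -- final data
  refine ⟨I.card, fun s => Wb ((I.orderIsoOfFin rfl s : Fin N)),
    fun s k j => ((A ((I.orderIsoOfFin rfl s : Fin N)) k j : ℚ) : ℝ),
    fun s => bv ((I.orderIsoOfFin rfl s : Fin N)), ⟨?_, ?_, ?_, ?_⟩, ?_, ?_⟩
  · -- real polyhedral description
    intro s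
    exact ⟨q' _, fun e j => ((P ((I.orderIsoOfFin rfl s : Fin N)) e j : ℚ) : ℝ),
      pv _, rfl⟩
  · -- nonempty interior
    intro s
    set i : Fin N := (I.orderIsoOfFin rfl s : Fin N) with hidef
    have hpredi : pred i := (Finset.mem_filter.1 (I.orderIsoOfFin rfl s).2).2
    obtain ⟨⟨x0, hx0⟩, hset, -⟩ := hpredi
    have hx0V : x0 ∈ {x : Fin n → ℝ | ∀ e, pv i e < ∑ j, (P i e j : ℝ) * x j} := by
      rw [← hset]; exact hx0
    have hVsub : {x : Fin n → ℝ | ∀ e, pv i e < ∑ j, (P i e j : ℝ) * x j} ⊆ Wb i :=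
      fun x hx e => le_of_lt (hx e)
    exact ⟨x0, interior_maximal hVsub (hVopen i) hx0V⟩
  · -- covering
    rw [Set.eq_univ_iff_forall]
    intro x
    have := hT ▸ Set.mem_univ x
    obtain ⟨i, hiI, hx⟩ := Set.mem_iUnion₂.1 this
    obtain ⟨s, hs⟩ : ∃ s, (I.orderIsoOfFin rfl s : Fin N) = i :=
      ⟨(I.orderIsoOfFin rfl).symm ⟨i, hiI⟩, by simp⟩
    exact Set.mem_iUnion.2 ⟨s, hs ▸ hx⟩
  · -- affine on each closed piece
    intro s x hx k
    set i : Fin N := (I.orderIsoOfFin rfl s : Fin N) with hidef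
    have hpredi : pred i := (Finset.mem_filter.1 (I.orderIsoOfFin rfl s).2).2
    obtain ⟨⟨x0, hx0⟩, hset, haff⟩ := hpredi
    have hx0V : ∀ e, pv i e < ∑ j, (P i e j : ℝ) * x0 j := by
      have h : x0 ∈ {x : Fin n → ℝ | ∀ e, pv i e < ∑ j, (P i e j : ℝ) * x j} := by
        rw [← hset]; exact hx0
      exact h
    set g : ℝ → Fin n → ℝ := fun t j => x j + t * (x0 j - x j) with hg
    have hgmem : ∀ t ∈ Set.Ioc (0:ℝ) 1, Fin.append (g t) (F (g t)) ∈ f i := by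
      intro t ht
      have : g t ∈ {x | ∀ e, pv i e < ∑ j, (P i e j : ℝ) * x j} := by
        intro e
        have hsum : ∑ j, (P i e j : ℝ) * g t j
            = (1 - t) * (∑ j, (P i e j : ℝ) * x j) + t * (∑ j, (P i e j : ℝ) * x0 j) := by
          simp only [Finset.mul_sum, ← Finset.sum_add_distrib]
          exact Finset.sum_congr rfl fun j _ => by simp only [hg]; ring
        rw [hsum]
        have h1 : (1 - t) * (pv i e) ≤ (1 - t) * ∑ j, (P i e j : ℝ) * x j :=
          mul_le_mul_of_nonneg_left (hx e) (by linarith [ht.2])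
        have h2 : t * (pv i e) < t * ∑ j, (P i e j : ℝ) * x0 j :=
          mul_lt_mul_of_pos_left (hx0V e) ht.1
        nlinarith
      have hmem : g t ∈ {x | Fin.append x (F x) ∈ f i} := by
        rw [hset]; exact this
      exact hmem
    have haffg : ∀ t ∈ Set.Ioc (0:ℝ) 1,
        F (g t) k = (∑ j, (A i k j : ℝ) * g t j) + bv i k :=
      fun t ht => haff (g t) (hgmem t ht) k
    have hgc : Continuous g := by
      apply continuous_pi
      intro j
      fun_prop
    have hg0 : g 0 = x := by funext j; simp [hg]
    have hl1 : Filter.Tendsto (fun t => F (g t) k) (nhdsWithin 0 (Set.Ioi 0))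
        (nhds (F x k)) := by
      have hc : Continuous fun t => F (g t) k :=
        (continuous_apply k).comp (hcont.comp hgc)
      have := hc.tendsto 0
      rw [show F (g 0) k = F x k from by rw [hg0]] at this
      exact this.mono_left nhdsWithin_le_nhds
    have hl2 : Filter.Tendsto (fun t => (∑ j, (A i k j : ℝ) * g t j) + bv i k)
        (nhdsWithin 0 (Set.Ioi 0)) (nhds ((∑ j, (A i k j : ℝ) * x j) + bv i k)) := by
      have hc : Continuous fun t => (∑ j, (A i k j : ℝ) * g t j) + bv i k := by
        apply Continuous.add _ continuous_const
        exact continuous_finset_sum _ fun j _ => by fun_prop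
      have := hc.tendsto 0
      rw [show (∑ j, (A i k j : ℝ) * g 0 j) + bv i k
          = (∑ j, (A i k j : ℝ) * x j) + bv i k from by rw [hg0]] at this
      exact this.mono_left nhdsWithin_le_nhds
    have hev : (fun t => F (g t) k)
        =ᶠ[nhdsWithin 0 (Set.Ioi 0)] (fun t => (∑ j, (A i k j : ℝ) * g t j) + bv i k) :=
      Filter.eventuallyEq_of_mem (Ioc_mem_nhdsGT zero_lt_one) haffg
    exact tendsto_nhds_unique hl1 (hl2.congr' hev.symm)
  · -- rational polyhedral description
    intro s
    exact ⟨q' _, P ((I.orderIsoOfFin rfl s : Fin N)), pv _, rfl⟩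
  · -- rational matrices
    intro s k j
    exact ⟨A ((I.orderIsoOfFin rfl s : Fin N)) k j, rfl⟩
end

section
/- Let F : ℝⁿ → ℝ^m be a piecewise affine function with piecewise description (W⁽ˢ⁾, A⁽ˢ⁾, b⁽ˢ⁾)_{s∈[p]}. Then for every k ∈ [m] there exist an integer M_k ≥ 1 and nonempty subsets S_{k1}, …, S_{kM_k} ⊆ [p] such that for all x ∈ ℝⁿ: F_k(x) = min_{i ∈ [M_k]} max_{s ∈ S_{ki}} ( ⟨A⁽ˢ⁾_k, x⟩ + b⁽ˢ⁾_k ), where A⁽ˢ⁾_k denotes the k-th row of A⁽ˢ⁾. -/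
open Finset

/-- 1D covering lemma: if `[u,v]` is covered by closed sets `I s` (`s ∈ S`)
on each of which `f` agrees with the affine function `t ↦ ga s + t * gb s`,
then some `s ∈ S` satisfies `ga s + u·gb s ≤ f u` and `f v ≤ ga s + v·gb s`. -/
lemma ovch1D {p : ℕ} (f : ℝ → ℝ) (ga gb : Fin p → ℝ)
    (I : Fin p → Set ℝ)
    (hIclosed : ∀ s, IsClosed (I s))
    (hagree : ∀ s, ∀ t ∈ I s, f t = ga s + t * gb s) :
    ∀ (S : Finset (Fin p)) (u v : ℝ), u ≤ v → (Set.Icc u v ⊆ ⋃ s ∈ S, I s) →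
      ∃ s ∈ S, ga s + u * gb s ≤ f u ∧ f v ≤ ga s + v * gb s := by
  intro S
  induction S using Finset.strongInduction with
  | _ S IH =>
    intro u v huv hcov
    obtain ⟨s0, hs0S, hvs0⟩ : ∃ s ∈ S, v ∈ I s := by
      have := hcov (Set.right_mem_Icc.2 huv)
      simpa using this
    set J := I s0 ∩ Set.Icc u v with hJ
    have hJne : J.Nonempty := ⟨v, hvs0, Set.right_mem_Icc.2 huv⟩
    have hJbdd : BddBelow J := ⟨u, fun t ht => ht.2.1⟩
    have hJclosed : IsClosed J := (hIclosed s0).inter isClosed_Icc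
    have hwJ : sInf J ∈ J := hJclosed.csInf_mem hJne hJbdd
    set w := sInf J with hw
    have hwI : w ∈ I s0 := hwJ.1
    have huw : u ≤ w := hwJ.2.1
    have hwv : w ≤ v := hwJ.2.2
    rcases eq_or_lt_of_le huw with huw' | huw'
    · refine ⟨s0, hs0S, ?_, le_of_eq (hagree s0 v hvs0)⟩
      rw [hagree s0 u (huw' ▸ hwI)]
    · -- u < w
      have hdisj : ∀ t, u ≤ t → t < w → t ∉ I s0 := by
        intro t h1 h2 ht
        exact absurd (csInf_le hJbdd ⟨ht, h1, h2.le.trans hwv⟩) (not_le.2 h2)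
      have hsub : Set.Ico u w ⊆ ⋃ s ∈ S.erase s0, I s := by
        intro t ht
        obtain ⟨s, hsS, hts⟩ : ∃ s ∈ S, t ∈ I s := by
          have := hcov ⟨ht.1, ht.2.le.trans hwv⟩
          simpa using this
        have hne : s ≠ s0 := fun h => hdisj t ht.1 ht.2 (h ▸ hts)
        exact Set.mem_biUnion (Finset.mem_erase.2 ⟨hne, hsS⟩) hts
      have hUclosed : IsClosed (⋃ s ∈ S.erase s0, I s) := by
        apply Set.Finite.isClosed_biUnion (Set.toFinite _)
        exact fun s _ => hIclosed s
      have hwU : w ∈ ⋃ s ∈ S.erase s0, I s := by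
        have h1 : w ∈ closure (Set.Ico u w) := by
          rw [closure_Ico (ne_of_lt huw')]
          exact Set.right_mem_Icc.2 huw'.le
        have h2 := closure_mono hsub h1
        rwa [hUclosed.closure_eq] at h2
      have hcov' : Set.Icc u w ⊆ ⋃ s ∈ S.erase s0, I s := by
        intro t ht
        rcases eq_or_lt_of_le ht.2 with h | h
        · exact h ▸ hwU
        · exact hsub ⟨ht.1, h⟩
      obtain ⟨s, hsS', h1, h2⟩ := IH (S.erase s0) (Finset.erase_ssubset hs0S) u w huw'.le hcov'
      have hsS : s ∈ S := Finset.mem_of_mem_erase hsS'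
      by_cases hc : f v ≤ ga s + v * gb s
      · exact ⟨s, hsS, h1, hc⟩
      · push_neg at hc
        have hfw : f w = ga s0 + w * gb s0 := hagree s0 w hwI
        have hfv : f v = ga s0 + v * gb s0 := hagree s0 v hvs0
        rw [hfv] at hc
        rw [hfw] at h2
        have hwlt : w < v := by
          rcases eq_or_lt_of_le hwv with h | h
          · exfalso; rw [h] at h2; linarith
          · exact h
        have key : ga s0 + u * gb s0 ≤ ga s + u * gb s := by nlinarith
        exact ⟨s0, hs0S, key.trans h1, le_of_eq hfv⟩

/-- Key two-point lemma (Ovchinnikov): for any `z, x` there is a piece `s` with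
`g_s(z) ≤ F(z)` and `g_s(x) ≥ F(x)`. -/
lemma ovchKey {n m p : ℕ} (F : (Fin n → ℝ) → Fin m → ℝ)
    (W : Fin p → Set (Fin n → ℝ)) (A : Fin p → Fin m → Fin n → ℝ)
    (b : Fin p → Fin m → ℝ)
    (h : IsPiecewiseDescription F p W A b) (k : Fin m) (z x : Fin n → ℝ) :
    ∃ s, (∑ j, A s k j * z j) + b s k ≤ F z k ∧
         F x k ≤ (∑ j, A s k j * x j) + b s k := by
  obtain ⟨hW, -, hCov, hAff⟩ := h
  set L : ℝ → Fin n → ℝ := fun t j => z j + t * (x j - z j) with hL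
  have hline : ∀ (c : Fin n → ℝ) (t : ℝ),
      (∑ j, c j * L t j) = (∑ j, c j * z j) + t * ((∑ j, c j * x j) - ∑ j, c j * z j) := by
    intro c t
    have h1 : ∀ j ∈ Finset.univ, c j * L t j = c j * z j + t * (c j * x j - c j * z j) := by
      intro j _
      simp only [hL]; ring
    rw [Finset.sum_congr rfl h1, Finset.sum_add_distrib, ← Finset.mul_sum,
      Finset.sum_sub_distrib]
  obtain ⟨s, -, h1, h2⟩ := ovch1D (fun t => F (L t) k)
    (fun s => (∑ j, A s k j * z j) + b s k)
    (fun s => (∑ j, A s k j * x j) - (∑ j, A s k j * z j))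
    (fun s => {t | L t ∈ W s})
    (by
      intro s
      obtain ⟨q, C, d, hWs⟩ := hW s
      have : {t | L t ∈ W s} =
          ⋂ i, {t : ℝ | d i ≤ (∑ j, C i j * z j) + t * ((∑ j, C i j * x j) - ∑ j, C i j * z j)} := by
        ext t
        simp only [hWs, Set.mem_setOf_eq, Set.mem_iInter, hline]
      show IsClosed {t | L t ∈ W s}
      rw [this]
      exact isClosed_iInter fun i => isClosed_le continuous_const (by fun_prop)
    )
    (by
      intro s t ht
      have h2 := hAff s (L t) ht k
      show F (L t) k = ((∑ j, A s k j * z j) + b s k) +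
        t * ((∑ j, A s k j * x j) - (∑ j, A s k j * z j))
      rw [h2, hline]
      ring
    )
    Finset.univ 0 1 zero_le_one
    (by
      intro t _
      have : L t ∈ ⋃ s, W s := by rw [hCov]; trivial
      obtain ⟨s, hs⟩ := Set.mem_iUnion.1 this
      exact Set.mem_biUnion (Finset.mem_univ s) hs
    )
  have hL0 : L 0 = z := by funext j; simp [hL]
  have hL1 : L 1 = x := by funext j; simp [hL]
  refine ⟨s, ?_, ?_⟩
  · have := h1; rw [hL0] at this; linarith
  · have := h2; rw [hL1] at this; linarith

theorem stmt15 {n m p : ℕ} (F : (Fin n → ℝ) → Fin m → ℝ)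
    (W : Fin p → Set (Fin n → ℝ)) (A : Fin p → Fin m → Fin n → ℝ)
    (b : Fin p → Fin m → ℝ)
    (h : IsPiecewiseDescription F p W A b) :
    ∀ k : Fin m, ∃ (M : ℕ) (hM : 0 < M) (Ss : Fin M → Finset (Fin p))
      (hS : ∀ i, (Ss i).Nonempty),
      ∀ x, F x k =
        Finset.univ.inf' ⟨⟨0, hM⟩, Finset.mem_univ _⟩ (fun i =>
          (Ss i).sup' (hS i) (fun s => (∑ j, A s k j * x j) + b s k)) := by
  classical
  intro k
  set g : Fin p → (Fin n → ℝ) → ℝ := fun s x => (∑ j, A s k j * x j) + b s k with hg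
  have keyL : ∀ z x, ∃ s, g s z ≤ F z k ∧ F x k ≤ g s x := fun z x =>
    ovchKey F W A b h k z x
  set P : Finset (Fin p) → Prop := fun T => ∀ x, ∃ s ∈ T, F x k ≤ g s x with hP
  set Sig : (Fin n → ℝ) → Finset (Fin p) :=
    fun z => Finset.univ.filter (fun s => g s z ≤ F z k) with hSig
  have hSigP : ∀ z, P (Sig z) := by
    intro z x
    obtain ⟨s, h1, h2⟩ := keyL z x
    exact ⟨s, Finset.mem_filter.2 ⟨Finset.mem_univ _, h1⟩, h2⟩
  set G : Finset (Finset (Fin p)) := Finset.univ.filter P with hG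
  have hSigG : ∀ z, Sig z ∈ G := fun z =>
    Finset.mem_filter.2 ⟨Finset.mem_univ _, hSigP z⟩
  have hGP : ∀ T ∈ G, P T := fun T hT => (Finset.mem_filter.1 hT).2
  refine ⟨G.card, Finset.card_pos.2 ⟨Sig 0, hSigG 0⟩,
    fun i => (G.equivFin.symm i : Finset (Fin p)), ?_, ?_⟩
  · intro i
    obtain ⟨s, hs, -⟩ := hGP _ (G.equivFin.symm i).2 0
    exact ⟨s, hs⟩
  · intro x
    apply le_antisymm
    · apply Finset.le_inf'
      intro i _
      obtain ⟨s, hs, hle⟩ := hGP _ (G.equivFin.symm i).2 x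
      exact hle.trans (Finset.le_sup'
        (fun s => (∑ j, A s k j * x j) + b s k) hs)
    · have hle : ((G.equivFin ⟨Sig x, hSigG x⟩ : Fin G.card) : Fin G.card) ∈
          (Finset.univ : Finset (Fin G.card)) := Finset.mem_univ _
      refine le_trans (Finset.inf'_le _ hle) ?_
      apply Finset.sup'_le
      intro s hs
      simp only [Equiv.symm_apply_apply] at hs
      exact (Finset.mem_filter.1 hs).2
end

section
/- (Tropical Carathéodory theorem.) For every set X ⊆ 𝕋ⁿ, tconv(X) = { z ∈ 𝕋ⁿ : there exist points x⁽¹⁾, …, x⁽ⁿ⁺¹⁾ ∈ X and scalars λ₁, …, λ_{n+1} ∈ 𝕋 with max_{1≤k≤n+1} λ_k = 0 such that z_i = max_{1≤k≤n+1} ( λ_k + x⁽ᵏ⁾_i ) for all i ∈ [n] }. -/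
open Finset

lemma trop_add_sup (a b c : Trop) : a + (b ⊔ c) = (a + b) ⊔ (a + c) := by
  rcases le_total b c with h | h
  · rw [sup_eq_right.2 h, sup_eq_right.2 (add_le_add (le_refl a) h)]
  · rw [sup_eq_left.2 h, sup_eq_left.2 (add_le_add (le_refl a) h)]

lemma trop_add_finsup {κ : Type} [Fintype κ] (a : Trop) (f : κ → Trop) :
    a + Finset.univ.sup f = Finset.univ.sup (fun k => a + f k) := by
  have := Finset.comp_sup_eq_sup_comp (s := (Finset.univ : Finset κ)) (f := f)
    (g := fun t => a + t) (fun x y => trop_add_sup a x y) (by simp)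
  simpa [Function.comp_def] using this

lemma sup_univ_succ' {N : ℕ} (f : Fin (N + 1) → Trop) :
    Finset.univ.sup f = f 0 ⊔ Finset.univ.sup (fun k : Fin N => f k.succ) := by
  apply le_antisymm
  · apply Finset.sup_le
    intro k _
    induction k using Fin.cases with
    | zero => exact le_sup_left
    | succ j =>
        exact le_sup_of_le_right (Finset.le_sup (f := fun k : Fin N => f k.succ) (Finset.mem_univ j))
  · apply sup_le
    · exact Finset.le_sup (Finset.mem_univ 0)
    · exact Finset.sup_le fun j _ => Finset.le_sup (Finset.mem_univ j.succ)

lemma sup_univ_sum {α β : Type} [Fintype α] [Fintype β] (f : α ⊕ β → Trop) :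
    Finset.univ.sup f =
      Finset.univ.sup (fun a => f (Sum.inl a)) ⊔ Finset.univ.sup (fun b => f (Sum.inr b)) := by
  apply le_antisymm
  · apply Finset.sup_le
    rintro (a | b) _
    · exact le_sup_of_le_left (Finset.le_sup (f := fun a => f (Sum.inl a)) (Finset.mem_univ a))
    · exact le_sup_of_le_right (Finset.le_sup (f := fun b => f (Sum.inr b)) (Finset.mem_univ b))
  · exact sup_le (Finset.sup_le fun a _ => Finset.le_sup (Finset.mem_univ _))
      (Finset.sup_le fun b _ => Finset.le_sup (Finset.mem_univ _))

lemma comboMem {n : ℕ} (X Y : Set (Fin n → Trop)) (hY : TropicallyConvex Y) (hXY : X ⊆ Y) :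
    ∀ (N : ℕ) (x : Fin (N + 1) → Fin n → Trop) (l : Fin (N + 1) → Trop),
      (∀ k, x k ∈ X) → Finset.univ.sup l = 0 →
      (fun i => Finset.univ.sup (fun k => l k + x k i)) ∈ Y := by
  intro N
  induction N with
  | zero =>
    intro x l hx hl
    have h1 : ∀ f : Fin 1 → Trop, Finset.univ.sup f = f 0 := by
      intro f; rw [sup_univ_succ']; simp
    have hl0 : l 0 = 0 := by rw [← h1 l]; exact hl
    have : (fun i => Finset.univ.sup (fun k => l k + x k i)) = x 0 := by
      funext i; rw [h1 (fun k => l k + x k i), hl0, zero_add]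
    rw [this]; exact hXY (hx 0)
  | succ N ih =>
    intro x l hx hl
    set s := Finset.univ.sup (fun k : Fin (N + 1) => l k.succ) with hs
    have hsplit : Finset.univ.sup l = l 0 ⊔ s := sup_univ_succ' l
    rcases eq_or_ne s ⊥ with hbot | hne
    · have htail : ∀ k : Fin (N + 1), l k.succ = ⊥ := by
        intro k
        have := Finset.le_sup (f := fun k : Fin (N + 1) => l k.succ) (Finset.mem_univ k)
        rw [← hs, hbot] at this
        exact le_bot_iff.1 this
      have hl0 : l 0 = 0 := by
        rw [hsplit, hbot, sup_bot_eq] at hl; exact hl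
      have : (fun i => Finset.univ.sup (fun k => l k + x k i)) = x 0 := by
        funext i
        rw [sup_univ_succ' (fun k => l k + x k i)]
        have : Finset.univ.sup (fun k : Fin (N + 1) => l k.succ + x k.succ i) = ⊥ := by
          rw [Finset.sup_eq_bot_iff]
          intro k _
          rw [htail k, WithBot.bot_add]
        rw [this, sup_bot_eq, hl0, zero_add]
      rw [this]; exact hXY (hx 0)
    · obtain ⟨c, hc⟩ := WithBot.ne_bot_iff_exists.1 hne
      set l' : Fin (N + 1) → Trop := fun k => ((-c : ℝ) : Trop) + l k.succ with hl'def
      have hl' : Finset.univ.sup l' = 0 := by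
        rw [hl'def]
        rw [← trop_add_finsup, ← hs, ← hc, ← WithBot.coe_add]
        norm_num
      have hw := ih (fun k => x k.succ) l' (fun k => hx k.succ) hl'
      have hcoef : l 0 ⊔ (c : Trop) = 0 := by rw [hc, ← hsplit]; exact hl
      have hmem := hY (x 0) (hXY (hx 0)) _ hw (l 0) (c : Trop) hcoef
      have heq : (fun i => (l 0 + x 0 i) ⊔
            ((c : Trop) + Finset.univ.sup (fun k : Fin (N + 1) => l' k + x k.succ i)))
          = (fun i => Finset.univ.sup (fun k => l k + x k i)) := by
        funext i
        have h1 : Finset.univ.sup (fun k : Fin (N + 1) => l' k + x k.succ i)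
            = ((-c : ℝ) : Trop) + Finset.univ.sup (fun k : Fin (N+1) => l k.succ + x k.succ i) := by
          rw [trop_add_finsup]
          congr 1; funext k; rw [hl'def, add_assoc]
        rw [h1, ← add_assoc, ← WithBot.coe_add]
        norm_num
        rw [sup_univ_succ' (fun k => l k + x k i)]
      rw [heq] at hmem
      exact hmem

lemma reduce {n : ℕ} (X : Set (Fin n → Trop)) {κ : Type} [Fintype κ]
    (x : κ → Fin n → Trop) (l : κ → Trop) (hx : ∀ k, x k ∈ X)
    (hl : Finset.univ.sup l = 0) (z : Fin n → Trop)
    (hz : ∀ i, z i = Finset.univ.sup fun k => l k + x k i) :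
    ∃ (x' : Fin (n + 1) → Fin n → Trop) (l' : Fin (n + 1) → Trop),
      (∀ k, x' k ∈ X) ∧ Finset.univ.sup l' = 0 ∧
      ∀ i, z i = Finset.univ.sup (fun k => l' k + x' k i) := by
  have hne : (Finset.univ : Finset κ).Nonempty := by
    rcases (Finset.univ : Finset κ).eq_empty_or_nonempty with h | h
    · rw [h, Finset.sup_empty] at hl
      exact absurd hl (by simp)
    · exact h
  obtain ⟨k0, -, hk0⟩ := Finset.exists_mem_eq_sup Finset.univ hne l
  have hk0' : l k0 = 0 := by rw [← hk0]; exact hl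
  have hsel : ∀ i, ∃ k, Finset.univ.sup (fun k => l k + x k i) = l k + x k i := by
    intro i
    obtain ⟨k, -, h⟩ := Finset.exists_mem_eq_sup Finset.univ hne (fun k => l k + x k i)
    exact ⟨k, h⟩
  choose ksel hksel using hsel
  set g : Fin (n + 1) → κ := Fin.snoc ksel k0 with hg
  refine ⟨fun j => x (g j), fun j => l (g j), fun j => hx _, ?_, ?_⟩
  · apply le_antisymm
    · exact Finset.sup_le fun j _ => hl ▸ Finset.le_sup (Finset.mem_univ (g j))
    · have : l (g (Fin.last n)) = 0 := by rw [hg, Fin.snoc_last, hk0']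
      calc (0 : Trop) = l (g (Fin.last n)) := this.symm
        _ ≤ _ := Finset.le_sup (f := fun j => l (g j)) (Finset.mem_univ (Fin.last n))
  · intro i
    apply le_antisymm
    · have : z i = l (g i.castSucc) + x (g i.castSucc) i := by
        rw [hz i, hksel i, hg, Fin.snoc_castSucc]
      rw [this]
      exact Finset.le_sup (f := fun j => l (g j) + x (g j) i) (Finset.mem_univ i.castSucc)
    · apply Finset.sup_le
      intro j _
      rw [hz i]
      exact Finset.le_sup (f := fun k => l k + x k i) (Finset.mem_univ (g j))


theorem stmt17 {n : ℕ} (X : Set (Fin n → Trop)) :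
    tconv X =
      {z | ∃ (x : Fin (n + 1) → Fin n → Trop) (l : Fin (n + 1) → Trop),
        (∀ k, x k ∈ X) ∧ Finset.univ.sup l = 0 ∧
        ∀ i, z i = Finset.univ.sup (fun k => l k + x k i)} := by
  apply le_antisymm
  · apply Set.sInter_subset_of_mem
    constructor
    · -- RHS is tropically convex
      rintro u ⟨xu, lu, hxu, hlu, hu⟩ v ⟨xv, lv, hxv, hlv, hv⟩ a b hab
      apply reduce X (κ := Fin (n + 1) ⊕ Fin (n + 1))
        (Sum.elim xu xv) (Sum.elim (fun k => a + lu k) (fun k => b + lv k))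
      · rintro (k | k)
        · exact hxu k
        · exact hxv k
      · rw [sup_univ_sum]
        simp only [Sum.elim_inl, Sum.elim_inr]
        rw [← trop_add_finsup, ← trop_add_finsup, hlu, hlv, add_zero, add_zero]
        exact hab
      · intro i
        rw [sup_univ_sum]
        simp only [Sum.elim_inl, Sum.elim_inr]
        rw [hu i, hv i, trop_add_finsup a, trop_add_finsup b]
        congr 1 <;> · congr 1; funext k; rw [add_assoc]
    · -- X ⊆ RHS
      intro x hxX
      refine ⟨fun _ => x, fun _ => 0, fun _ => hxX, ?_, ?_⟩
      · exact Finset.sup_const Finset.univ_nonempty 0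
      · intro i
        rw [show (fun k : Fin (n+1) => (0 : Trop) + x i) = fun _ => x i by funext k; rw [zero_add]]
        exact (Finset.sup_const Finset.univ_nonempty (x i)).symm
  · rintro z ⟨x, l, hx, hl, hz⟩
    intro Y hY
    obtain ⟨hYc, hXY⟩ := hY
    have : z = fun i => Finset.univ.sup (fun k => l k + x k i) := funext hz
    rw [this]
    exact comboMem X Y hYc hXY n x l hx hl
end
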